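/- arXiv:1207.4010 — 3 statements merged into one kernel-verified Lean document; each statement's English description precedes it below -/
import Mathlib

section
/- Let B be a finite Blaschke product of order n ≥ 1. Then the derivative B′ has exactly n − 1 zeros in the open unit disk 𝔻, counted with multiplicity. -/
open Complex Metric

noncomputable section

/-- The open unit disk in ℂ. -/
def unitDisk : Set ℂ := Metric.ball (0 : ℂ) 1

/-- `B` is a finite Blaschke product of order `n`:
`B(z) = λ ∏ (z - α j) / (1 - conj (α j) * z)` with `|λ| = 1` and `|α j| < 1`. -/
def IsBlaschkeOf (n : ℕ) (B : ℂ → ℂ) : Prop :=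
  ∃ (lam : ℂ) (α : Fin n → ℂ),
    ‖lam‖ = 1 ∧ (∀ j, ‖α j‖ < 1) ∧
      ∀ z : ℂ, B z = lam * ∏ j, (z - α j) / (1 - (starRingEnd ℂ) (α j) * z)

/-- `g` has a zero of order exactly `m` at `z₀`. -/
def ZeroOrderAt (g : ℂ → ℂ) (z₀ : ℂ) (m : ℕ) : Prop :=
  ∃ h : ℂ → ℂ, AnalyticAt ℂ h z₀ ∧ h z₀ ≠ 0 ∧
    ∀ᶠ z in nhds z₀, g z = (z - z₀) ^ m * h z

/-- The zeros of `g` in the set `s`, counted with multiplicity, number exactly `n`. -/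
def CountZerosIn (g : ℂ → ℂ) (s : Set ℂ) (n : ℕ) : Prop :=
  ∃ (t : Finset ℂ) (m : ℂ → ℕ),
    (∀ z : ℂ, z ∈ t ↔ z ∈ s ∧ g z = 0) ∧
    (∀ z ∈ t, ZeroOrderAt g z (m z)) ∧
    ∑ z ∈ t, m z = n

/-- The solutions in the unit disk of `f z = w`, counted with multiplicity, number exactly `n`. -/
def FiberCount (f : ℂ → ℂ) (w : ℂ) (n : ℕ) : Prop :=
  CountZerosIn (fun z => f z - w) unitDisk n

namespace Stmt9
open Polynomial Finset

local notation "conj'" => starRingEnd ℂ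

def Gp (a : ℂ) : ℂ[X] := (X - C a) * (1 - C (conj' a) * X)
def Gc (a : ℂ) : ℂ[X] := (X - C (conj' a)) * (1 - C a * X)
def Rp {n : ℕ} (α : Fin n → ℂ) : ℂ[X] :=
  ∑ j, C (1 - conj' (α j) * α j) * ∏ k ∈ univ.erase j, Gp (α k)
def Pp {n : ℕ} (α : Fin n → ℂ) : ℂ[X] := ∏ j, (X - C (α j))
def Qp {n : ℕ} (α : Fin n → ℂ) : ℂ[X] := ∏ j, (1 - C (conj' (α j)) * X)

lemma reflect1_sub (a : ℂ) : reflect 1 (X - C a) = 1 - C a * X := by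
  have h : (X - C a : ℂ[X]) = C 1 * X ^ 1 + C (-a) * X ^ 0 := by
    simp [map_neg]; ring
  rw [h, reflect_add, reflect_C_mul, reflect_C_mul, reflect_monomial, reflect_monomial]
  simp [revAt_le, map_neg]
  ring

lemma reflect1_one_sub (a : ℂ) : reflect 1 (1 - C a * X) = X - C a := by
  have h : (1 - C a * X : ℂ[X]) = C (-a) * X ^ 1 + C 1 * X ^ 0 := by
    simp [map_neg]; ring
  rw [h, reflect_add, reflect_C_mul, reflect_C_mul, reflect_monomial, reflect_monomial]
  simp [revAt_le, map_neg]
  ring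

lemma natDegree_one_sub_le (a : ℂ) : (1 - C a * X : ℂ[X]).natDegree ≤ 1 := by
  compute_degree

lemma natDegree_Gc_le (a : ℂ) : (Gc a).natDegree ≤ 2 := by
  unfold Gc; compute_degree

lemma reflect2_Gc (a : ℂ) : reflect 2 (Gc a) = Gp a := by
  unfold Gc Gp
  rw [show (2:ℕ) = 1 + 1 from rfl,
    reflect_mul _ _ (natDegree_X_sub_C_le _) (natDegree_one_sub_le a),
    reflect1_sub, reflect1_one_sub]
  ring

lemma natDegree_prod_Gc_le {n : ℕ} (α : Fin n → ℂ) (s : Finset (Fin n)) :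
    (∏ k ∈ s, Gc (α k)).natDegree ≤ 2 * s.card := by
  refine le_trans (natDegree_prod_le _ _) ?_
  calc ∑ k ∈ s, (Gc (α k)).natDegree ≤ ∑ _k ∈ s, 2 :=
        Finset.sum_le_sum fun k _ => natDegree_Gc_le _
    _ = 2 * s.card := by rw [Finset.sum_const, smul_eq_mul, mul_comm]

lemma reflect_prod_Gc {n : ℕ} (α : Fin n → ℂ) (s : Finset (Fin n)) :
    reflect (2 * s.card) (∏ k ∈ s, Gc (α k)) = ∏ k ∈ s, Gp (α k) := by
  induction s using Finset.induction with
  | empty =>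
      rw [prod_empty, prod_empty, ← pow_zero (X:ℂ[X]), reflect_monomial]
      norm_num
  | @insert a s ha ih =>
      rw [prod_insert ha, prod_insert ha, card_insert_of_notMem ha,
        show 2 * (s.card + 1) = 2 + 2 * s.card by ring,
        reflect_mul _ _ (natDegree_Gc_le _) (natDegree_prod_Gc_le α s),
        reflect2_Gc, ih]


lemma map_Gp (a : ℂ) : (Gp a).map (conj') = Gc a := by
  unfold Gp Gc
  simp [Polynomial.map_mul, Polynomial.map_sub, Polynomial.map_one]

lemma map_Rp {n : ℕ} (α : Fin n → ℂ) :
    (Rp α).map conj' = ∑ j, C (1 - conj' (α j) * α j) * ∏ k ∈ univ.erase j, Gc (α k) := by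
  unfold Rp
  rw [Polynomial.map_sum]
  refine Finset.sum_congr rfl fun j _ => ?_
  rw [Polynomial.map_mul, Polynomial.map_prod, map_C]
  congr 1
  · congr 1
    simp [mul_comm]
  · exact Finset.prod_congr rfl fun k _ => map_Gp _

lemma reflect_sum {ι : Type*} [DecidableEq ι] (N : ℕ) (s : Finset ι) (f : ι → ℂ[X]) :
    reflect N (∑ i ∈ s, f i) = ∑ i ∈ s, reflect N (f i) := by
  induction s using Finset.induction with
  | empty => simp
  | @insert a s ha ih => rw [sum_insert ha, sum_insert ha, reflect_add, ih]

lemma derivative_finset_prod {ι : Type*} [DecidableEq ι] (s : Finset ι) (f : ι → ℂ[X]) :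
    derivative (∏ i ∈ s, f i) = ∑ i ∈ s, (∏ k ∈ s.erase i, f k) * derivative (f i) := by
  induction s using Finset.induction with
  | empty => simp
  | @insert a s ha ih =>
      rw [prod_insert ha, derivative_mul, ih, sum_insert ha, erase_insert ha, Finset.mul_sum]
      have h2 : ∀ i ∈ s, f a * ((∏ k ∈ s.erase i, f k) * derivative (f i))
          = (∏ k ∈ (insert a s).erase i, f k) * derivative (f i) := by
        intro i hi
        have hia : i ≠ a := fun h => ha (h ▸ hi)
        rw [Finset.erase_insert_of_ne hia.symm,
          prod_insert (fun h => ha (Finset.mem_of_mem_erase h)), mul_assoc]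
      rw [Finset.sum_congr rfl h2]
      ring


lemma natDegree_Rp_le {n : ℕ} (α : Fin n → ℂ) :
    (Rp α).natDegree ≤ 2 * (n - 1) := by
  unfold Rp
  refine natDegree_sum_le_of_forall_le _ _ fun j _ => ?_
  refine le_trans (natDegree_C_mul_le _ _) ?_
  refine le_trans (natDegree_prod_le _ _) ?_
  calc ∑ k ∈ univ.erase j, (Gp (α k)).natDegree ≤ ∑ _k ∈ univ.erase j, 2 := by
        refine Finset.sum_le_sum fun k _ => ?_
        unfold Gp
        compute_degree
    _ = 2 * (n - 1) := by
        rw [Finset.sum_const, smul_eq_mul, mul_comm, card_erase_of_mem (mem_univ j), card_univ,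
          Fintype.card_fin]

lemma reflect_Rp {n : ℕ} (α : Fin n → ℂ) :
    reflect (2 * (n - 1)) ((Rp α).map conj') = Rp α := by
  rw [map_Rp, reflect_sum]
  unfold Rp
  refine Finset.sum_congr rfl fun j _ => ?_
  rw [reflect_C_mul]
  congr 1
  have hc : (univ.erase j).card = n - 1 := by
    rw [card_erase_of_mem (mem_univ j), card_univ, Fintype.card_fin]
  rw [← hc, reflect_prod_Gc]

lemma RPQ {n : ℕ} (α : Fin n → ℂ) :
    derivative (Pp α) * Qp α - Pp α * derivative (Qp α) = Rp α := by
  classical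
  unfold Pp Qp Rp
  rw [derivative_finset_prod, derivative_finset_prod, Finset.sum_mul, Finset.mul_sum,
    ← Finset.sum_sub_distrib]
  refine Finset.sum_congr rfl fun j _ => ?_
  have hP : (∏ k, (X - C (α k))) = (X - C (α j)) * ∏ k ∈ univ.erase j, (X - C (α k)) :=
    (Finset.mul_prod_erase univ _ (mem_univ j)).symm
  have hQ : (∏ k, (1 - C (conj' (α k)) * X)) =
      (1 - C (conj' (α j)) * X) * ∏ k ∈ univ.erase j, (1 - C (conj' (α k)) * X) :=
    (Finset.mul_prod_erase univ _ (mem_univ j)).symm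
  have hG : ∏ k ∈ univ.erase j, Gp (α k) =
      (∏ k ∈ univ.erase j, (X - C (α k))) * ∏ k ∈ univ.erase j, (1 - C (conj' (α k)) * X) := by
    unfold Gp; rw [Finset.prod_mul_distrib]
  have hd1 : derivative (X - C (α j)) = 1 := by
    rw [derivative_sub, derivative_X, derivative_C, sub_zero]
  have hd2 : derivative (1 - C (conj' (α j)) * X) = - C (conj' (α j)) := by
    rw [derivative_sub, derivative_one, derivative_C_mul, derivative_X, mul_one, zero_sub]
  rw [hd1, hd2, hG, hP, hQ]
  have hkey : (1 - C (conj' (α j)) * X) + C (conj' (α j)) * (X - C (α j))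
      = C (1 - conj' (α j) * α j) := by
    rw [C_sub, C_mul, C_1]; ring
  calc (∏ k ∈ univ.erase j, (X - C (α k))) * 1 *
        ((1 - C (conj' (α j)) * X) * ∏ k ∈ univ.erase j, (1 - C (conj' (α k)) * X)) -
        (X - C (α j)) * (∏ k ∈ univ.erase j, (X - C (α k))) *
        ((∏ k ∈ univ.erase j, (1 - C (conj' (α k)) * X)) * -C (conj' (α j)))
      = ((1 - C (conj' (α j)) * X) + C (conj' (α j)) * (X - C (α j))) *
        ((∏ k ∈ univ.erase j, (X - C (α k))) * ∏ k ∈ univ.erase j, (1 - C (conj' (α k)) * X)) := by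
        ring
    _ = _ := by rw [hkey]

lemma Rp_eval_circle {n : ℕ} (hn : 1 ≤ n) (α : Fin n → ℂ) (hα : ∀ j, ‖α j‖ < 1)
    (z : ℂ) (hz : ‖z‖ = 1) : (Rp α).eval z ≠ 0 := by
  have hz1 : z * conj' z = 1 := by
    rw [Complex.mul_conj]
    norm_cast
    rw [Complex.normSq_eq_norm_sq, hz, one_pow]
  have hfac : ∀ k : Fin n, (z - α k) * (1 - conj' (α k) * z)
      = z * ((Complex.normSq (z - α k) : ℝ) : ℂ) := by
    intro k
    have h1 : (1 : ℂ) - conj' (α k) * z = z * conj' (z - α k) := by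
      rw [map_sub]
      have : z * (conj' z - conj' (α k)) = z * conj' z - z * conj' (α k) := by ring
      rw [this, hz1]; ring
    rw [h1, ← mul_assoc, mul_comm (z - α k) z, mul_assoc, Complex.mul_conj]
  have heval : (Rp α).eval z = z ^ (n - 1) *
      ((∑ j, (1 - Complex.normSq (α j)) * ∏ k ∈ univ.erase j, Complex.normSq (z - α k) : ℝ) : ℂ) := by
    unfold Rp
    rw [eval_finset_sum]
    push_cast
    rw [Finset.mul_sum]
    refine Finset.sum_congr rfl fun j _ => ?_
    rw [eval_mul, eval_C, eval_prod]
    have hprod : ∏ k ∈ univ.erase j, (Gp (α k)).eval z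
        = z ^ (n - 1) * ((∏ k ∈ univ.erase j, Complex.normSq (z - α k) : ℝ) : ℂ) := by
      have : ∀ k ∈ univ.erase j, (Gp (α k)).eval z
          = z * ((Complex.normSq (z - α k) : ℝ) : ℂ) := by
        intro k _
        unfold Gp
        rw [eval_mul, eval_sub, eval_sub, eval_X, eval_C, eval_one, eval_mul, eval_C, eval_X]
        exact hfac k
      rw [Finset.prod_congr rfl this, Finset.prod_mul_distrib, Finset.prod_const,
        card_erase_of_mem (mem_univ j), card_univ, Fintype.card_fin]
      push_cast
      ring
    rw [hprod]
    have hcj : (1 : ℂ) - conj' (α j) * α j = ((1 - Complex.normSq (α j) : ℝ) : ℂ) := by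
      push_cast
      rw [mul_comm, Complex.mul_conj]
    rw [hcj]
    push_cast
    ring
  rw [heval]
  apply mul_ne_zero
  · apply pow_ne_zero
    intro h
    rw [h] at hz
    simp at hz
  · rw [Ne, Complex.ofReal_eq_zero]
    have hpos : 0 < ∑ j, (1 - Complex.normSq (α j)) * ∏ k ∈ univ.erase j, Complex.normSq (z - α k) := by
      refine Finset.sum_pos (fun j _ => ?_) ?_
      · apply mul_pos
        · have := hα j
          have h2 : Complex.normSq (α j) < 1 := by
            rw [← Complex.sq_norm]
            nlinarith [norm_nonneg (α j)]
          linarith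
        · refine Finset.prod_pos fun k _ => ?_
          rw [Complex.normSq_pos, sub_ne_zero]
          intro h
          rw [h] at hz
          exact absurd hz (ne_of_lt (hα k))
      · rw [Finset.univ_nonempty_iff]
        exact Fin.pos_iff_nonempty.mp hn
    exact ne_of_gt hpos

lemma one_sub_CX_ne_zero (v : ℂ) : (1 - C v * X : ℂ[X]) ≠ 0 := by
  intro h
  have := congrArg (eval 0) h
  simp at this

lemma prod_one_sub_ne_zero (m : Multiset ℂ) :
    ((m.map fun v => 1 - C v * X).prod : ℂ[X]) ≠ 0 := by
  intro h
  have := congrArg (eval 0) h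
  rw [eval_multiset_prod] at this
  simp [Multiset.map_map] at this

lemma roots_one_sub_CX {v : ℂ} (hv : v ≠ 0) : (1 - C v * X : ℂ[X]).roots = {v⁻¹} := by
  have h : (1 - C v * X : ℂ[X]) = C (-v) * (X - C v⁻¹) := by
    have hvv : (v : ℂ) * v⁻¹ = 1 := mul_inv_cancel₀ hv
    rw [mul_sub, ← C_mul, neg_mul, hvv, map_neg, map_neg, C_1]
    ring
  rw [h, roots_C_mul _ (neg_ne_zero.mpr hv), roots_X_sub_C]

lemma roots_prod_one_sub (m : Multiset ℂ) :
    ((m.map fun v => 1 - C v * X).prod : ℂ[X]).roots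
      = (m.filter (· ≠ 0)).map (·⁻¹) := by
  induction m using Multiset.induction with
  | empty => simp
  | @cons a m ih =>
      rw [Multiset.map_cons, Multiset.prod_cons,
        roots_mul (mul_ne_zero (one_sub_CX_ne_zero a) (prod_one_sub_ne_zero m)), ih]
      by_cases ha : a = 0
      · subst ha
        rw [Multiset.filter_cons_of_neg (s := m) (p := fun x => x ≠ 0) (by simp)]
        simp
      · rw [roots_one_sub_CX ha,
          Multiset.filter_cons_of_pos (s := m) (p := fun x => x ≠ 0) ha, Multiset.map_cons]
        rfl

lemma natDegree_prod_X_sub_le (m : Multiset ℂ) :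
    ((m.map fun v => X - C v).prod : ℂ[X]).natDegree ≤ Multiset.card m := by
  refine le_trans (natDegree_multiset_prod_le _) ?_
  rw [Multiset.map_map]
  have : ∀ v ∈ m, (Function.comp natDegree (fun v => X - C v)) v ≤ 1 := by
    intro v _
    simp [Function.comp, natDegree_X_sub_C_le]
  calc (m.map (Function.comp natDegree fun v => X - C v)).sum
      ≤ (m.map fun _ => 1).sum := Multiset.sum_map_le_sum_map _ _ this
    _ = Multiset.card m := by simp

lemma reflect_multiset_prod (m : Multiset ℂ) :
    reflect (Multiset.card m) ((m.map fun v => X - C v).prod : ℂ[X])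
      = (m.map fun v => 1 - C v * X).prod := by
  induction m using Multiset.induction with
  | empty =>
      simp only [Multiset.map_zero, Multiset.prod_zero, Multiset.card_zero]
      rw [← pow_zero (X:ℂ[X]), reflect_monomial]
      norm_num
  | @cons a m ih =>
      rw [Multiset.map_cons, Multiset.prod_cons, Multiset.card_cons,
        show Multiset.card m + 1 = 1 + Multiset.card m by ring,
        reflect_mul _ _ (natDegree_X_sub_C_le _) (natDegree_prod_X_sub_le m),
        reflect1_sub, ih, Multiset.map_cons, Multiset.prod_cons]

lemma roots_reflect (q : ℂ[X]) (hq : q ≠ 0) (N : ℕ) (hN : q.natDegree ≤ N) :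
    (reflect N q).roots
      = Multiset.replicate (N - q.natDegree) 0 + (q.roots.filter (· ≠ 0)).map (·⁻¹) := by
  have hsplit : Multiset.card q.roots = q.natDegree :=
    splits_iff_card_roots.mp (IsAlgClosed.splits q)
  have hfact := C_leadingCoeff_mul_prod_multiset_X_sub_C (p := q) hsplit
  set d := q.natDegree with hd
  set ν := N - d with hν
  have hNd : N = d + ν := by omega
  have hlc : q.leadingCoeff ≠ 0 := leadingCoeff_ne_zero.mpr hq
  have h1 : reflect N q = C q.leadingCoeff *
      ((q.roots.map fun v => 1 - C v * X).prod * X ^ ν) := by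
    conv_lhs => rw [← hfact]
    rw [reflect_C_mul, hNd, ← mul_one (q.roots.map fun a => X - C a).prod,
      reflect_mul _ _ ((natDegree_prod_X_sub_le q.roots).trans (le_of_eq hsplit))
        (by simp : (1:ℂ[X]).natDegree ≤ ν),
      show reflect ν (1:ℂ[X]) = X ^ ν from by
        rw [← pow_zero (X:ℂ[X]), reflect_monomial, revAt_le (Nat.zero_le ν), Nat.sub_zero],
      ← hsplit, reflect_multiset_prod]
  rw [h1, roots_C_mul _ hlc,
    roots_mul (mul_ne_zero (prod_one_sub_ne_zero _) (pow_ne_zero _ X_ne_zero)),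
    roots_prod_one_sub, roots_pow, roots_X]
  rw [Multiset.nsmul_singleton]
  exact add_comm _ _

lemma card_filter_eq_sum_count (p : ℂ → Prop) [DecidablePred p] (μ : Multiset ℂ) :
    Multiset.card (μ.filter p) = ∑ w ∈ μ.toFinset.filter p, μ.count w := by
  rw [← Multiset.toFinset_sum_count_eq (μ.filter p), Multiset.toFinset_filter]
  refine Finset.sum_congr rfl fun w hw => ?_
  rw [Multiset.count_filter_of_pos (Finset.mem_filter.mp hw).2]

lemma count_main {n : ℕ} (hn : 1 ≤ n) (μ : Multiset ℂ) (d ν : ℕ)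
    (hcard : Multiset.card μ = d)
    (hν : μ.count 0 = ν) (hdν : d + ν = 2 * (n - 1))
    (hcirc : ∀ w ∈ μ, ‖w‖ ≠ 1)
    (hpair : ∀ w : ℂ, w ≠ 0 → μ.count w = μ.count (conj' w)⁻¹) :
    Multiset.card (μ.filter (fun w => ‖w‖ < 1)) = n - 1 := by
  classical
  set A := Multiset.card (μ.filter (fun w => ‖w‖ < 1)) with hA
  set B := Multiset.card (μ.filter (fun w => 1 < ‖w‖)) with hB
  set A₀ := Multiset.card (μ.filter (fun w => ‖w‖ < 1 ∧ w ≠ 0)) with hA0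
  -- A + B = d
  have hAB : A + B = d := by
    have hsplit := Multiset.filter_add_not (fun w => ‖w‖ < 1) μ
    have hcg : Multiset.filter (fun w => ¬ ‖w‖ < 1) μ
        = Multiset.filter (fun w => 1 < ‖w‖) μ := by
      refine Multiset.filter_congr fun w hw => ?_
      constructor
      · intro h
        exact lt_of_le_of_ne (not_lt.mp h) (Ne.symm (hcirc w hw))
      · intro h
        exact not_lt.mpr (le_of_lt h)
    rw [hcg] at hsplit
    have := congrArg Multiset.card hsplit
    rw [Multiset.card_add] at this
    rw [hA, hB, ← hcard, this]
  -- A = ν + A₀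
  have hAν : A = ν + A₀ := by
    have h1 : μ.filter (fun w => ‖w‖ < 1 ∧ w ≠ 0)
        = Multiset.filter (fun w => w ≠ 0) (μ.filter (fun w => ‖w‖ < 1)) := by
      rw [Multiset.filter_filter]
      refine Multiset.filter_congr fun w _ => ?_
      tauto
    have h2 := Multiset.filter_add_not (fun w => w = 0) (μ.filter (fun w => ‖w‖ < 1))
    have h3 : Multiset.filter (fun w => w = 0) (μ.filter (fun w => ‖w‖ < 1))
        = Multiset.filter (fun w => w = 0) μ := by
      rw [Multiset.filter_filter]
      refine Multiset.filter_congr fun w _ => ⟨fun h => h.1, fun h => ⟨h, ?_⟩⟩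
      rw [h]
      simp
    have h4 : Multiset.card (Multiset.filter (fun w => w = 0) μ) = ν := by
      rw [← hν, Multiset.count_eq_card_filter_eq]
      congr 1
      exact Multiset.filter_congr fun w _ => eq_comm
    have h5 := congrArg Multiset.card h2
    rw [Multiset.card_add, h3, h4] at h5
    rw [hA, ← h5, hA0, h1]
  -- B = A₀ via pairing
  have habs_inv : ∀ w : ℂ, ‖(conj' w)⁻¹‖ = ‖w‖⁻¹ := by
    intro w
    rw [norm_inv, Complex.norm_conj]
  have hBA : B = A₀ := by
    rw [hB, hA0, card_filter_eq_sum_count, card_filter_eq_sum_count]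
    refine Finset.sum_bij' (fun w _ => (conj' w)⁻¹) (fun w _ => (conj' w)⁻¹) ?_ ?_ ?_ ?_ ?_
    · intro w hw
      rw [Finset.mem_filter, Multiset.mem_toFinset] at hw ⊢
      obtain ⟨hwμ, hw1⟩ := hw
      have hw0 : w ≠ 0 := by
        intro h; rw [h] at hw1; simp at hw1; linarith
      refine ⟨?_, ?_, ?_⟩
      · rw [← Multiset.count_pos, ← hpair w hw0, Multiset.count_pos]; exact hwμ
      · rw [habs_inv]
        exact inv_lt_one_of_one_lt₀ hw1
      · simp [hw0]
    · intro w hw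
      rw [Finset.mem_filter, Multiset.mem_toFinset] at hw ⊢
      obtain ⟨hwμ, hw1, hw0⟩ := hw
      refine ⟨?_, ?_⟩
      · rw [← Multiset.count_pos, ← hpair w hw0, Multiset.count_pos]; exact hwμ
      · rw [habs_inv]
        exact (one_lt_inv₀ (norm_pos_iff.mpr hw0)).mpr hw1
    · intro w _
      show (conj' ((conj' w)⁻¹))⁻¹ = w
      rw [map_inv₀, Complex.conj_conj, inv_inv]
    · intro w _
      show (conj' ((conj' w)⁻¹))⁻¹ = w
      rw [map_inv₀, Complex.conj_conj, inv_inv]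
    · intro w hw
      rw [Finset.mem_filter, Multiset.mem_toFinset] at hw
      have hw0 : w ≠ 0 := by
        intro h; rw [h] at hw; simp at hw; linarith [hw.2]
      exact hpair w hw0
  omega

lemma Rp_ne_zero {n : ℕ} (hn : 1 ≤ n) (α : Fin n → ℂ) (hα : ∀ j, ‖α j‖ < 1) :
    Rp α ≠ 0 := by
  intro h
  have := Rp_eval_circle hn α hα 1 (by simp)
  rw [h] at this
  simp at this

lemma conj_injective : Function.Injective (conj' : ℂ → ℂ) := (starRingEnd ℂ).injective

lemma Rp_card_roots {n : ℕ} (hn : 1 ≤ n) (α : Fin n → ℂ) (hα : ∀ j, ‖α j‖ < 1) :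
    Multiset.card ((Rp α).roots.filter (fun w => ‖w‖ < 1)) = n - 1 := by
  classical
  have hR0 : Rp α ≠ 0 := Rp_ne_zero hn α hα
  set R := Rp α with hRdef
  set Rc := R.map conj' with hRcdef
  have hRc0 : Rc ≠ 0 := by
    rw [hRcdef, Ne, Polynomial.map_eq_zero]
    exact hR0
  set d := R.natDegree with hd
  have hdc : Rc.natDegree = d := Polynomial.natDegree_map conj'
  have hdle : d ≤ 2 * (n - 1) := natDegree_Rp_le α
  have hrefl : reflect (2 * (n - 1)) Rc = R := reflect_Rp α
  have hμc : Rc.roots = R.roots.map conj' :=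
    (IsAlgClosed.splits R).roots_map_of_injective conj_injective
  have hroots : R.roots = Multiset.replicate (2 * (n - 1) - d) 0
      + ((Rc.roots.filter (· ≠ 0)).map (·⁻¹)) := by
    conv_lhs => rw [← hrefl]
    rw [roots_reflect Rc hRc0 (2 * (n - 1)) (hdc ▸ hdle), hdc]
  have hcard : Multiset.card R.roots = d :=
    splits_iff_card_roots.mp (IsAlgClosed.splits R)
  have hν : R.roots.count 0 = 2 * (n - 1) - d := by
    rw [hroots, Multiset.count_add, Multiset.count_replicate, if_pos rfl,
      Multiset.count_eq_zero.mpr, add_zero]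
    intro hmem
    obtain ⟨v, hv, hv0⟩ := Multiset.mem_map.mp hmem
    exact (Multiset.mem_filter.mp hv).2 (inv_eq_zero.mp hv0)
  have hcirc : ∀ w ∈ R.roots, ‖w‖ ≠ 1 := by
    intro w hw habs
    have := (mem_roots'.mp hw).2
    exact Rp_eval_circle hn α hα w habs this
  have hpair : ∀ w : ℂ, w ≠ 0 → R.roots.count w = R.roots.count (conj' w)⁻¹ := by
    intro w hw0
    have hwinv0 : w⁻¹ ≠ 0 := inv_ne_zero hw0
    rw [hroots, Multiset.count_add, Multiset.count_add]
    have hwc0 : (conj' w)⁻¹ ≠ 0 := by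
      rw [Ne, inv_eq_zero]
      intro h
      exact hw0 (by simpa using congrArg conj' h)
    have hz1 : (Multiset.replicate (2 * (n - 1) - d) (0:ℂ)).count w = 0 := by
      rw [Multiset.count_replicate, if_neg (Ne.symm hw0)]
    have hz2 : (Multiset.replicate (2 * (n - 1) - d) (0:ℂ)).count ((conj' w)⁻¹) = 0 := by
      rw [Multiset.count_replicate, if_neg (Ne.symm hwc0)]
    rw [hz1, hz2, zero_add, zero_add]
    set M := Rc.roots.filter (· ≠ 0) with hM
    have hstep1 : (M.map (·⁻¹)).count w = M.count w⁻¹ := by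
      rw [Multiset.count_map, Multiset.count_eq_card_filter_eq]
      congr 1
      refine Multiset.filter_congr fun v hv => ?_
      have hv0 : v ≠ 0 := (Multiset.mem_filter.mp hv).2
      constructor
      · intro h
        rw [h, inv_inv]
      · intro h
        rw [← h, inv_inv]
    have hstep2 : M.count w⁻¹ = Rc.roots.count w⁻¹ := by
      rw [hM, Multiset.count_filter_of_pos (p := fun v => v ≠ 0) (inv_ne_zero hw0)]
    have hstep3 : Rc.roots.count w⁻¹ = R.roots.count (conj' w)⁻¹ := by
      rw [hμc]
      have := Multiset.count_map_eq_count' conj' R.roots conj_injective (conj' w⁻¹)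
      rw [Complex.conj_conj] at this
      rw [this, map_inv₀]
    rw [hstep1, hstep2, hstep3, hroots, Multiset.count_add, hz2, zero_add]
  have := count_main hn R.roots d (2 * (n - 1) - d) hcard hν (by omega) hcirc hpair
  exact this

lemma Qp_eval (z : ℂ) {n : ℕ} (α : Fin n → ℂ) :
    (Qp α).eval z = ∏ j, (1 - conj' (α j) * z) := by
  unfold Qp
  rw [eval_prod]
  exact Finset.prod_congr rfl fun j _ => by simp

lemma Pp_eval (z : ℂ) {n : ℕ} (α : Fin n → ℂ) :
    (Pp α).eval z = ∏ j, (z - α j) := by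
  unfold Pp
  rw [eval_prod]
  exact Finset.prod_congr rfl fun j _ => by simp

lemma Qp_ne_zero_on_disk {n : ℕ} (α : Fin n → ℂ) (hα : ∀ j, ‖α j‖ < 1)
    (z : ℂ) (hz : ‖z‖ ≤ 1) : (Qp α).eval z ≠ 0 := by
  rw [Qp_eval]
  refine Finset.prod_ne_zero_iff.mpr fun j _ => ?_
  intro h
  have h1 : conj' (α j) * z = 1 := by
    have := sub_eq_zero.mp h
    linear_combination -this
  have := congrArg (‖·‖) h1
  rw [norm_mul, Complex.norm_conj, norm_one] at this
  nlinarith [hα j, norm_nonneg z, norm_nonneg (α j)]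

lemma deriv_B_eq {n : ℕ} (α : Fin n → ℂ) (lam : ℂ) (B : ℂ → ℂ)
    (hBeq : ∀ z : ℂ, B z = lam * ∏ j, (z - α j) / (1 - conj' (α j) * z))
    (z : ℂ) (hQ : (Qp α).eval z ≠ 0) :
    HasDerivAt B (lam * ((Rp α).eval z / (Qp α).eval z ^ 2)) z := by
  have hBfun : B = fun w => lam * ((Pp α).eval w / (Qp α).eval w) := by
    funext w
    rw [hBeq w, Pp_eval, Qp_eval, Finset.prod_div_distrib]
  rw [hBfun]
  have h1 := Polynomial.hasDerivAt (Pp α) z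
  have h2 := Polynomial.hasDerivAt (Qp α) z
  have h3 := (h1.div h2 hQ).const_mul lam
  exact h3.congr_deriv (by
  rw [← RPQ α]
  rw [eval_sub, eval_mul, eval_mul])

theorem stmt9' (n : ℕ) (hn : 1 ≤ n) (B : ℂ → ℂ) (lam : ℂ) (α : Fin n → ℂ)
    (hlam : ‖lam‖ = 1) (hα : ∀ j, ‖α j‖ < 1)
    (hBeq : ∀ z : ℂ, B z = lam * ∏ j, (z - α j) / (1 - conj' (α j) * z)) :
    ∃ (t : Finset ℂ) (m : ℂ → ℕ),
      (∀ z : ℂ, z ∈ t ↔ z ∈ Metric.ball (0:ℂ) 1 ∧ deriv B z = 0) ∧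
      (∀ z ∈ t, ∃ h : ℂ → ℂ, AnalyticAt ℂ h z ∧ h z ≠ 0 ∧
        ∀ᶠ w in nhds z, deriv B w = (w - z) ^ (m z) * h w) ∧
      ∑ z ∈ t, m z = n - 1 := by
  classical
  have hlam0 : lam ≠ 0 := by
    intro h; rw [h] at hlam; simp at hlam
  set R := Rp α with hRdef
  have hR0 : R ≠ 0 := Rp_ne_zero hn α hα
  have hmem_disk : ∀ z : ℂ, z ∈ Metric.ball (0:ℂ) 1 ↔ ‖z‖ < 1 := by
    intro z
    rw [Metric.mem_ball, dist_zero_right]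
  have hderivB : ∀ z : ℂ, ‖z‖ < 1 →
      deriv B z = lam * ((Rp α).eval z / (Qp α).eval z ^ 2) := by
    intro z hz
    exact (deriv_B_eq α lam B hBeq z (Qp_ne_zero_on_disk α hα z (le_of_lt hz))).deriv
  refine ⟨R.roots.toFinset.filter (fun z => ‖z‖ < 1),
    fun z => rootMultiplicity z R, ?_, ?_, ?_⟩
  · intro z
    rw [Finset.mem_filter, Multiset.mem_toFinset, mem_roots hR0, hmem_disk]
    constructor
    · rintro ⟨hroot, hz1⟩
      refine ⟨hz1, ?_⟩
      rw [hderivB z hz1, hroot, zero_div, mul_zero]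
    · rintro ⟨hz1, hd0⟩
      refine ⟨?_, hz1⟩
      rw [hderivB z hz1] at hd0
      rcases mul_eq_zero.mp hd0 with h | h
      · exact absurd h hlam0
      · rcases div_eq_zero_iff.mp h with h | h
        · exact h
        · exact absurd (pow_eq_zero_iff (by norm_num) |>.mp h)
            (Qp_ne_zero_on_disk α hα z (le_of_lt hz1))
  · intro z hz
    rw [Finset.mem_filter, Multiset.mem_toFinset, mem_roots hR0] at hz
    obtain ⟨hroot, hz1⟩ := hz
    set m := rootMultiplicity z R with hm
    set S := R /ₘ (X - C z) ^ m with hS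
    have hfact : (X - C z) ^ m * S = R := pow_mul_divByMonic_rootMultiplicity_eq R z
    have hSz : S.eval z ≠ 0 := eval_divByMonic_pow_rootMultiplicity_ne_zero z hR0
    have hQz : (Qp α).eval z ≠ 0 := Qp_ne_zero_on_disk α hα z (le_of_lt hz1)
    refine ⟨fun w => lam * (S.eval w / (Qp α).eval w ^ 2), ?_, ?_, ?_⟩
    · refine (analyticAt_const.mul (AnalyticAt.div ?_ ?_ (pow_ne_zero 2 hQz)))
      · exact (AnalyticOnNhd.eval_polynomial S) z (Set.mem_univ z)
      · exact ((AnalyticOnNhd.eval_polynomial (Qp α)) z (Set.mem_univ z)).pow 2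
    · simp only []
      apply mul_ne_zero hlam0
      exact div_ne_zero hSz (pow_ne_zero 2 hQz)
    · have hUopen : IsOpen {w : ℂ | (Qp α).eval w ≠ 0} := by
        have : {w : ℂ | (Qp α).eval w ≠ 0} = (fun w => (Qp α).eval w) ⁻¹' ({0}ᶜ) := rfl
        rw [this]
        exact (isOpen_compl_singleton).preimage (Qp α).continuous
      refine Filter.eventually_of_mem (hUopen.mem_nhds hQz) fun w hw => ?_
      have hdw : deriv B w = lam * ((Rp α).eval w / (Qp α).eval w ^ 2) :=
        (deriv_B_eq α lam B hBeq w hw).deriv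
      have hRw : (Rp α).eval w = (w - z) ^ m * S.eval w := by
        conv_lhs => rw [← hRdef, ← hfact]
        rw [eval_mul, eval_pow, eval_sub, eval_X, eval_C]
      rw [hdw, hRw]
      ring
  · have hsum : ∀ z ∈ R.roots.toFinset.filter (fun z => ‖z‖ < 1),
        rootMultiplicity z R = R.roots.count z := fun z _ => (count_roots R).symm
    rw [Finset.sum_congr rfl hsum, ← card_filter_eq_sum_count]
    exact Rp_card_roots hn α hα

end Stmt9

/-- The derivative of a finite Blaschke product of order `n ≥ 1` has exactly `n - 1`
zeros in the open unit disk, counted with multiplicity. -/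
theorem stmt9 (n : ℕ) (hn : 1 ≤ n) (B : ℂ → ℂ) (hB : IsBlaschkeOf n B) :
    CountZerosIn (deriv B) unitDisk (n - 1) := by
  obtain ⟨lam, α, hlam, hα, hBeq⟩ := hB
  obtain ⟨t, m, h1, h2, h3⟩ := Stmt9.stmt9' n hn B lam α hlam hα hBeq
  exact ⟨t, m, h1, h2, h3⟩
end
end

section
/- Let b₁ and b₂ be finite Blaschke products of the same order k ≥ 1 that identify the same points of the open unit disk: for all z, w ∈ 𝔻, b₁(z) = b₁(w) if and only if b₂(z) = b₂(w). Then there exists a conformal automorphism σ of 𝔻 (a finite Blaschke product of order 1) such that b₂(z) = σ(b₁(z)) for all z ∈ 𝔻. -/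
open Complex Metric

noncomputable section

open Polynomial

namespace Stmt12Aux

lemma one_sub_ne' (x : ℂ) (h : ‖x‖ < 1) : (1 : ℂ) - x ≠ 0 := by
  intro h0
  have hx : x = 1 := by
    have := sub_eq_zero.mp h0
    exact this.symm
  rw [hx] at h
  simp at h

/-- modulus comparison via normSq -/
lemma abs_lt_abs_of_normSq {x y : ℂ} (h : normSq x < normSq y) :
    ‖x‖ < ‖y‖ := by
  rw [Complex.norm_def, Complex.norm_def]
  exact Real.sqrt_lt_sqrt (normSq_nonneg _) h

lemma normSq_lt_one {x : ℂ} (h : ‖x‖ < 1) : normSq x < 1 := by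
  have := Complex.sq_norm x
  nlinarith [norm_nonneg x]

/-- Blaschke factor strict contraction. -/
lemma factor_lt (z a : ℂ) (hz : ‖z‖ < 1) (ha : ‖a‖ < 1) :
    ‖z - a‖ < ‖1 - (starRingEnd ℂ) a * z‖ := by
  apply abs_lt_abs_of_normSq
  have h1 : normSq (z - a) = normSq z + normSq a - 2 * (z * (starRingEnd ℂ) a).re :=
    Complex.normSq_sub z a
  have h2 : normSq (1 - (starRingEnd ℂ) a * z)
      = 1 + normSq a * normSq z - 2 * (z * (starRingEnd ℂ) a).re := by
    rw [Complex.normSq_sub]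
    have : ((1 : ℂ) * (starRingEnd ℂ) ((starRingEnd ℂ) a * z)).re
        = ((z * (starRingEnd ℂ) a) : ℂ).re := by
      rw [one_mul, map_mul, Complex.conj_conj]
      rw [show a * (starRingEnd ℂ) z = (starRingEnd ℂ) (z * (starRingEnd ℂ) a) by
        rw [map_mul, Complex.conj_conj]; ring]
      exact Complex.conj_re _
    rw [this]
    simp [Complex.normSq_mul, Complex.normSq_conj]
  rw [h1, h2]
  have hz' := normSq_lt_one hz
  have ha' := normSq_lt_one ha
  nlinarith [normSq_nonneg z, normSq_nonneg a]

/-- reverse inequality outside the disk -/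
lemma factor_ge (z a : ℂ) (hz : 1 ≤ ‖z‖) (ha : ‖a‖ < 1) :
    ‖1 - (starRingEnd ℂ) a * z‖ ≤ ‖z - a‖ := by
  rw [Complex.norm_def, Complex.norm_def]
  apply Real.sqrt_le_sqrt
  have h1 : normSq (z - a) = normSq z + normSq a - 2 * (z * (starRingEnd ℂ) a).re :=
    Complex.normSq_sub z a
  have h2 : normSq (1 - (starRingEnd ℂ) a * z)
      = 1 + normSq a * normSq z - 2 * (z * (starRingEnd ℂ) a).re := by
    rw [Complex.normSq_sub]
    have : ((1 : ℂ) * (starRingEnd ℂ) ((starRingEnd ℂ) a * z)).re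
        = ((z * (starRingEnd ℂ) a) : ℂ).re := by
      rw [one_mul, map_mul, Complex.conj_conj]
      rw [show a * (starRingEnd ℂ) z = (starRingEnd ℂ) (z * (starRingEnd ℂ) a) by
        rw [map_mul, Complex.conj_conj]; ring]
      exact Complex.conj_re _
    rw [this]
    simp [Complex.normSq_mul, Complex.normSq_conj]
  rw [h1, h2]
  have hz' : 1 ≤ normSq z := by
    have := Complex.sq_norm z
    nlinarith
  have ha' := normSq_lt_one ha
  nlinarith [normSq_nonneg a]

lemma denom_ne (z a : ℂ) (hz : ‖z‖ < 1) (ha : ‖a‖ < 1) :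
    1 - (starRingEnd ℂ) a * z ≠ 0 := by
  apply one_sub_ne'
  rw [norm_mul, Complex.norm_conj]
  calc ‖a‖ * ‖z‖ ≤ ‖a‖ * 1 := by
        exact mul_le_mul_of_nonneg_left hz.le (norm_nonneg a)
    _ < 1 := by simpa using ha

/-- a Blaschke product of order ≥ 1 maps the disk into the disk -/
lemma blaschke_maps (k : ℕ) (hk : 1 ≤ k) (lam : ℂ) (α : Fin k → ℂ)
    (hlam : ‖lam‖ = 1) (hα : ∀ j, ‖α j‖ < 1)
    (z : ℂ) (hz : ‖z‖ < 1) :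
    ‖lam * ∏ j, (z - α j) / (1 - (starRingEnd ℂ) (α j) * z)‖ < 1 := by
  rw [norm_mul, hlam, one_mul, norm_prod]
  obtain ⟨m, rfl⟩ := Nat.exists_eq_succ_of_ne_zero (by omega : k ≠ 0)
  rw [Fin.prod_univ_succ]
  have hfac : ∀ j : Fin (m + 1),
      ‖(z - α j) / (1 - (starRingEnd ℂ) (α j) * z)‖ < 1 := by
    intro j
    rw [norm_div, div_lt_one]
    · exact factor_lt z (α j) hz (hα j)
    · exact norm_pos_iff.mpr (denom_ne z (α j) hz (hα j))
  have hrest : (∏ j : Fin m, ‖(z - α j.succ) / (1 - (starRingEnd ℂ) (α j.succ) * z)‖) ≤ 1 := by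
    apply Finset.prod_le_one
    · intro i _; exact norm_nonneg _
    · intro i _; exact (hfac i.succ).le
  calc ‖(z - α 0) / (1 - (starRingEnd ℂ) (α 0) * z)‖
        * ∏ j : Fin m, ‖(z - α j.succ) / (1 - (starRingEnd ℂ) (α j.succ) * z)‖
      ≤ ‖(z - α 0) / (1 - (starRingEnd ℂ) (α 0) * z)‖ * 1 := by
        exact mul_le_mul_of_nonneg_left hrest (norm_nonneg _)
    _ < 1 := by simpa using hfac 0




variable {k : ℕ}

/-- numerator-type product -/
def PP (a : Fin k → ℂ) : ℂ[X] := ∏ j, (X - C (a j))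
/-- denominator-type product -/
def DD (a : Fin k → ℂ) : ℂ[X] := ∏ j, (1 - C ((starRingEnd ℂ) (a j)) * X)

lemma PP_monic (a : Fin k → ℂ) : (PP a).Monic :=
  monic_prod_of_monic _ _ fun i _ => monic_X_sub_C (a i)

lemma PP_natDegree (a : Fin k → ℂ) : (PP a).natDegree = k := by
  rw [PP, natDegree_prod]
  · simp
  · intro i _; exact X_sub_C_ne_zero (a i)

lemma DD_natDegree_le (a : Fin k → ℂ) : (DD a).natDegree ≤ k := by
  refine le_trans (natDegree_prod_le _ _) ?_
  calc (∑ j : Fin k, (1 - C ((starRingEnd ℂ) (a j)) * X).natDegree)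
      ≤ ∑ _j : Fin k, 1 := by
        apply Finset.sum_le_sum
        intro i _
        refine le_trans (natDegree_sub_le _ _) ?_
        simp [natDegree_C_mul_le]
        exact le_trans (natDegree_C_mul_le _ _) (by simp)
    _ = k := by simp

lemma eval_PP (a : Fin k → ℂ) (z : ℂ) : (PP a).eval z = ∏ j, (z - a j) := by
  simp [PP, eval_prod]

lemma eval_DD (a : Fin k → ℂ) (z : ℂ) :
    (DD a).eval z = ∏ j, (1 - (starRingEnd ℂ) (a j) * z) := by
  simp [DD, eval_prod]

lemma eval_DD_ne (a : Fin k → ℂ) (ha : ∀ j, ‖a j‖ < 1) (z : ℂ)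
    (hz : ‖z‖ < 1) : (DD a).eval z ≠ 0 := by
  rw [eval_DD]
  exact Finset.prod_ne_zero_iff.mpr fun j _ => denom_ne z (a j) hz (ha j)

lemma DD_coeff_abs_le (a : Fin k → ℂ) (ha : ∀ j, ‖a j‖ < 1) :
    ‖(DD a).coeff k‖ ≤ 1 := by
  have h : (DD a).coeff k = ∏ j, (-(starRingEnd ℂ) (a j)) := by
    have hco : ∀ j : Fin k, (1 - C ((starRingEnd ℂ) (a j)) * X).coeff 1
        = -(starRingEnd ℂ) (a j) := by
      intro j
      rw [coeff_sub, coeff_one]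
      simp
    have h2 := coeff_prod_of_natDegree_le (s := (Finset.univ : Finset (Fin k)))
      (fun j => (1 - C ((starRingEnd ℂ) (a j)) * X)) 1 (fun p _ => by
        refine le_trans (natDegree_sub_le _ _) ?_
        simp
        exact le_trans (natDegree_C_mul_le _ _) (by simp))
    simp only [Finset.card_univ, Fintype.card_fin, mul_one] at h2
    rw [DD, h2]
    exact Finset.prod_congr rfl fun j _ => hco j
  rw [h, norm_prod]
  apply Finset.prod_le_one
  · intro i _; exact norm_nonneg _
  · intro i _; simpa using (ha i).le

/-- the fiber polynomial `λ P - v D` -/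
def NN (lam v : ℂ) (a : Fin k → ℂ) : ℂ[X] := C lam * PP a - C v * DD a

lemma NN_coeff_k (lam v : ℂ) (a : Fin k → ℂ) :
    (NN lam v a).coeff k = lam - v * (DD a).coeff k := by
  rw [NN, coeff_sub, coeff_C_mul, coeff_C_mul]
  rw [show (PP a).coeff k = 1 from by
    have := (PP_monic a).coeff_natDegree
    rwa [PP_natDegree] at this]
  ring

lemma NN_coeff_k_ne (lam v : ℂ) (a : Fin k → ℂ) (hlam : ‖lam‖ = 1)
    (ha : ∀ j, ‖a j‖ < 1) (hv : ‖v‖ < 1) :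
    (NN lam v a).coeff k ≠ 0 := by
  rw [NN_coeff_k]
  intro h
  have h2 : lam = v * (DD a).coeff k := by linear_combination h
  have : ‖lam‖ < 1 := by
    rw [h2, norm_mul]
    calc ‖v‖ * ‖(DD a).coeff k‖
        ≤ ‖v‖ * 1 :=
          mul_le_mul_of_nonneg_left (DD_coeff_abs_le a ha) (norm_nonneg v)
      _ < 1 := by simpa using hv
  rw [hlam] at this; linarith

lemma NN_natDegree_le (lam v : ℂ) (a : Fin k → ℂ) : (NN lam v a).natDegree ≤ k := by
  refine le_trans (natDegree_sub_le _ _) (max_le ?_ ?_)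
  · exact le_trans (natDegree_C_mul_le _ _) (le_of_eq (PP_natDegree a))
  · exact le_trans (natDegree_C_mul_le _ _) (DD_natDegree_le a)

lemma NN_natDegree (lam v : ℂ) (a : Fin k → ℂ) (hlam : ‖lam‖ = 1)
    (ha : ∀ j, ‖a j‖ < 1) (hv : ‖v‖ < 1) :
    (NN lam v a).natDegree = k :=
  le_antisymm (NN_natDegree_le lam v a)
    (le_natDegree_of_ne_zero (NN_coeff_k_ne lam v a hlam ha hv))

lemma NN_ne_zero (lam v : ℂ) (a : Fin k → ℂ) (hlam : ‖lam‖ = 1)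
    (ha : ∀ j, ‖a j‖ < 1) (hv : ‖v‖ < 1) :
    NN lam v a ≠ 0 := fun h => NN_coeff_k_ne lam v a hlam ha hv (by simp [h])

/-- all roots of the fiber polynomial are in the disk -/
lemma NN_roots_in_disk (lam v : ℂ) (a : Fin k → ℂ) (hlam : ‖lam‖ = 1)
    (ha : ∀ j, ‖a j‖ < 1) (hv : ‖v‖ < 1)
    (x : ℂ) (hx : (NN lam v a).IsRoot x) : ‖x‖ < 1 := by
  by_contra h
  push_neg at h
  have hev : lam * ∏ j, (x - a j) = v * ∏ j, (1 - (starRingEnd ℂ) (a j) * x) := by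
    have := hx
    rw [IsRoot, NN, eval_sub, eval_mul, eval_mul, eval_C, eval_C, sub_eq_zero,
      eval_PP, eval_DD] at this
    exact this
  have habs : (∏ j, ‖x - a j‖)
      = ‖v‖ * ∏ j, ‖1 - (starRingEnd ℂ) (a j) * x‖ := by
    have := congrArg (‖·‖) hev
    rwa [norm_mul, norm_mul, norm_prod, norm_prod, hlam, one_mul] at this
  have hle : (∏ j, ‖1 - (starRingEnd ℂ) (a j) * x‖)
      ≤ ∏ j, ‖x - a j‖ := by
    apply Finset.prod_le_prod
    · intro i _; exact norm_nonneg _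
    · intro i _; exact factor_ge x (a i) h (ha i)
  by_cases hd : (∏ j, ‖1 - (starRingEnd ℂ) (a j) * x‖) = 0
  · rw [hd, mul_zero] at habs
    obtain ⟨i, _, hi⟩ := Finset.prod_eq_zero_iff.mp habs
    have : x = a i := by
      have := norm_eq_zero.mp hi
      linear_combination this
    rw [this] at h
    exact absurd (ha i) (by linarith)
  · have hdpos : 0 < ∏ j, ‖1 - (starRingEnd ℂ) (a j) * x‖ :=
      lt_of_le_of_ne (Finset.prod_nonneg fun i _ => norm_nonneg _) (Ne.symm hd)
    nlinarith [norm_nonneg v, hv]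

end Stmt12Aux

namespace Stmt12Aux
open Polynomial

lemma reflect_one_XsubC (a : ℂ) : reflect 1 (X - C a) = 1 - C a * X := by
  have h : (X - C a : ℂ[X]) = C 1 * X ^ 1 + C (-a) * X ^ 0 := by
    simp; ring
  rw [h, reflect_add, reflect_C_mul_X_pow, reflect_C_mul_X_pow,
    revAt_le (by norm_num : 1 ≤ 1), revAt_le (by norm_num : 0 ≤ 1)]
  simp [revAt]
  ring

lemma reflect_one_onesub (a : ℂ) : reflect 1 (1 - C a * X) = X - C a := by
  have h : (1 - C a * X : ℂ[X]) = C (-a) * X ^ 1 + C 1 * X ^ 0 := by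
    simp; ring
  rw [h, reflect_add, reflect_C_mul_X_pow, reflect_C_mul_X_pow,
    revAt_le (by norm_num : 1 ≤ 1), revAt_le (by norm_num : 0 ≤ 1)]
  simp [revAt]
  ring

lemma reflect_prod {ι : Type*} (s : Finset ι) (f g : ι → ℂ[X])
    (h1 : ∀ i ∈ s, (f i).natDegree ≤ 1) (h2 : ∀ i ∈ s, reflect 1 (f i) = g i) :
    reflect s.card (∏ i ∈ s, f i) = ∏ i ∈ s, g i := by
  classical
  induction s using Finset.cons_induction with
  | empty =>
    simp only [Finset.prod_empty, Finset.card_empty]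
    rw [show ((1:ℂ[X])) = C 1 from (map_one Polynomial.C).symm, reflect_C]
    simp
  | cons a s ha ih =>
    rw [Finset.prod_cons, Finset.prod_cons, Finset.card_cons]
    have hdeg : (∏ i ∈ s, f i).natDegree ≤ s.card := by
      refine le_trans (natDegree_prod_le _ _) ?_
      calc (∑ i ∈ s, (f i).natDegree) ≤ ∑ _i ∈ s, 1 :=
            Finset.sum_le_sum fun i hi => h1 i (Finset.mem_cons_of_mem hi)
        _ = s.card := by simp
    have := reflect_mul (f a) (∏ i ∈ s, f i)
      (F := 1) (G := s.card) (h1 a (Finset.mem_cons_self a s)) hdeg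
    rw [show s.card + 1 = 1 + s.card from by omega, this,
      h2 a (Finset.mem_cons_self a s),
      ih (fun i hi => h1 i (Finset.mem_cons_of_mem hi))
        (fun i hi => h2 i (Finset.mem_cons_of_mem hi))]

lemma reflect_PP (a : Fin k → ℂ) :
    reflect k ((PP a).map (starRingEnd ℂ)) = DD a := by
  rw [PP, Polynomial.map_prod]
  have : ∀ j : Fin k, ((X - C (a j)).map (starRingEnd ℂ)) = X - C ((starRingEnd ℂ) (a j)) := by
    intro j; simp
  simp only [this]
  have h := reflect_prod (Finset.univ : Finset (Fin k))
    (fun j => X - C ((starRingEnd ℂ) (a j)))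
    (fun j => 1 - C ((starRingEnd ℂ) (a j)) * X)
    (fun i _ => by simpa using natDegree_X_sub_C_le _)
    (fun i _ => reflect_one_XsubC _)
  simp only [Finset.card_univ, Fintype.card_fin] at h
  rw [h, DD]

lemma reflect_DD (a : Fin k → ℂ) :
    reflect k ((DD a).map (starRingEnd ℂ)) = PP a := by
  rw [DD, Polynomial.map_prod]
  have : ∀ j : Fin k, ((1 - C ((starRingEnd ℂ) (a j)) * X).map (starRingEnd ℂ))
      = 1 - C (a j) * X := by
    intro j; simp
  simp only [this]
  have h := reflect_prod (Finset.univ : Finset (Fin k))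
    (fun j => 1 - C (a j) * X) (fun j => X - C (a j))
    (fun i _ => by
      refine le_trans (natDegree_sub_le _ _) ?_
      simp
      exact le_trans (natDegree_C_mul_le _ _) (by simp))
    (fun i _ => reflect_one_onesub _)
  simp only [Finset.card_univ, Fintype.card_fin] at h
  rw [h, PP]

/-- a polynomial of degree `k` with `k` distinct roots splits over them -/
lemma factor_lemma (N : ℂ[X]) (k : ℕ) (hdeg : N.natDegree = k) (hN0 : N ≠ 0)
    (z : Fin k → ℂ) (hz : Function.Injective z) (hr : ∀ i, N.IsRoot (z i)) :
    N = C (N.coeff k) * ∏ i, (X - C (z i)) := by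
  classical
  set Q : ℂ[X] := ∏ i, (X - C (z i)) with hQ
  have hQm : Q.Monic := monic_prod_of_monic _ _ fun i _ => monic_X_sub_C (z i)
  have hQdeg : Q.natDegree = k := by
    rw [hQ, natDegree_prod]
    · simp
    · intro i _; exact X_sub_C_ne_zero (z i)
  have hle : (Finset.univ.val.map z) ≤ N.roots := by
    rw [Multiset.le_iff_count]
    intro x
    by_cases hx : ∃ i, z i = x
    · obtain ⟨i, rfl⟩ := hx
      rw [Multiset.count_map_eq_count' z _ hz,
        Multiset.count_eq_one_of_mem Finset.univ.nodup
          (Finset.mem_val.mpr (Finset.mem_univ i)),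
        count_roots]
      exact (rootMultiplicity_pos hN0).mpr (hr i)
    · rw [Multiset.count_eq_zero_of_notMem]
      · exact Nat.zero_le _
      · intro hmem
        obtain ⟨i, _, hi⟩ := Multiset.mem_map.mp hmem
        exact hx ⟨i, hi⟩
  have hdvd : Q ∣ N := by
    have h1 : Q = (Multiset.map (fun a => X - C a) (Finset.univ.val.map z)).prod := by
      rw [hQ, Finset.prod_eq_multiset_prod, Multiset.map_map]
      rfl
    rw [h1]
    exact dvd_trans
      (Multiset.prod_dvd_prod_of_le (Multiset.map_le_map hle))
      (prod_multiset_X_sub_C_dvd N)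
  obtain ⟨R, hR⟩ := hdvd
  have hR0 : R ≠ 0 := fun h => hN0 (by rw [hR, h, mul_zero])
  have hRdeg : R.natDegree = 0 := by
    have := natDegree_mul (hQm.ne_zero) hR0
    rw [← hR, hdeg, hQdeg] at this
    omega
  obtain ⟨r, hr'⟩ : ∃ r : ℂ, R = C r := ⟨R.coeff 0, eq_C_of_natDegree_eq_zero hRdeg⟩
  have hcoeff : N.coeff k = r := by
    rw [hR, hr', coeff_mul_C, show Q.coeff k = 1 from by
      have := hQm.coeff_natDegree; rwa [hQdeg] at this]
    ring
  rw [hcoeff, hR, hr']; ring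

lemma coprime_of_no_common_root (p q : ℂ[X]) (hp : p ≠ 0)
    (h : ∀ a : ℂ, ¬(p.IsRoot a ∧ q.IsRoot a)) : IsCoprime p q := by
  classical
  rw [← EuclideanDomain.gcd_isUnit_iff]
  by_contra hg
  have hg0 : EuclideanDomain.gcd p q ≠ 0 := by
    intro h0
    exact hp (EuclideanDomain.gcd_eq_zero_iff.mp h0).1
  have hdeg : (EuclideanDomain.gcd p q).degree ≠ 0 := by
    intro hdeg
    exact hg (Polynomial.isUnit_iff_degree_eq_zero.mpr hdeg)
  obtain ⟨x, hx⟩ := Complex.isAlgClosed.exists_root _ hdeg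
  exact h x ⟨hx.dvd (EuclideanDomain.gcd_dvd_left p q),
    hx.dvd (EuclideanDomain.gcd_dvd_right p q)⟩

end Stmt12Aux

namespace Stmt12Aux
open Polynomial

lemma exists_good_v (k : ℕ) (hk : 1 ≤ k) (lam : ℂ) (α : Fin k → ℂ)
    (hlam : ‖lam‖ = 1) (hα : ∀ j, ‖α j‖ < 1) :
    ∃ v : ℂ, ‖v‖ < 1 ∧ ∃ z : Fin k → ℂ, Function.Injective z ∧
      (∀ i, ‖z i‖ < 1) ∧ (∀ i, (NN lam v α).IsRoot (z i)) := by
  classical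
  have hlam0 : lam ≠ 0 := by
    intro h; rw [h] at hlam; simp at hlam
  set P : ℂ[X] := PP α with hP
  set D : ℂ[X] := DD α with hD
  have hP0 : P ≠ 0 := (PP_monic α).ne_zero
  -- no common roots of P and D
  have hnocommon : ∀ x : ℂ, ¬(P.IsRoot x ∧ D.IsRoot x) := by
    rintro x ⟨hxP, hxD⟩
    have hxP' : ∏ j, (x - α j) = 0 := by rwa [IsRoot, hP, eval_PP] at hxP
    obtain ⟨i, _, hi⟩ := Finset.prod_eq_zero_iff.mp hxP'
    have hxval : x = α i := by linear_combination hi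
    have : D.eval x ≠ 0 := by
      rw [hD, hxval]
      exact eval_DD_ne α hα (α i) (hα i)
    exact this hxD
  have hcop : IsCoprime P D := coprime_of_no_common_root P D hP0 hnocommon
  -- the Wronskian is nonzero
  set W : ℂ[X] := derivative P * D - P * derivative D with hW
  have hW0 : W ≠ 0 := by
    intro h0
    have heq : derivative P * D = P * derivative D := by
      have := sub_eq_zero.mp (hW ▸ h0)
      linear_combination this
    have hPd : P ∣ derivative P * D := ⟨derivative D, heq⟩
    have hPdvd : P ∣ derivative P := hcop.dvd_of_dvd_mul_right hPd
    have hder0 : derivative P ≠ 0 := by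
      intro h
      have := natDegree_eq_zero_of_derivative_eq_zero h
      rw [hP, PP_natDegree] at this
      omega
    have : derivative P = 0 :=
      eq_zero_of_dvd_of_degree_lt hPdvd (degree_derivative_lt hP0)
    exact hder0 this
  -- bad values
  set T : Finset ℂ := W.roots.toFinset.image (fun x => lam * P.eval x / D.eval x) with hT
  have hball : (Metric.ball (0:ℂ) 1).Infinite :=
    infinite_of_mem_nhds (0:ℂ) (Metric.ball_mem_nhds 0 one_pos)
  obtain ⟨v, hvball, hvT⟩ := hball.exists_notMem_finset T
  have hv : ‖v‖ < 1 := by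
    rw [Metric.mem_ball, dist_zero_right] at hvball
    simpa using hvball
  refine ⟨v, hv, ?_⟩
  set N : ℂ[X] := NN lam v α with hN
  have hN0 : N ≠ 0 := NN_ne_zero lam v α hlam hα hv
  have hNdeg : N.natDegree = k := NN_natDegree lam v α hlam hα hv
  -- no multiple roots
  have hcount : ∀ x : ℂ, N.roots.count x ≤ 1 := by
    intro x
    by_contra hc
    push_neg at hc
    have hmult : 2 ≤ rootMultiplicity x N := by
      rw [count_roots] at hc; omega
    have hroot : N.IsRoot x := by
      rw [← rootMultiplicity_pos hN0]; omega
    have hder : (derivative N).IsRoot x := by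
      have hd0 : derivative N ≠ 0 := by
        intro h
        have := natDegree_eq_zero_of_derivative_eq_zero h
        omega
      rw [← rootMultiplicity_pos hd0, derivative_rootMultiplicity_of_root hroot]
      omega
    -- unfold evaluations
    have hev1 : lam * P.eval x = v * D.eval x := by
      have := hroot
      rw [IsRoot, hN, NN, eval_sub, eval_mul, eval_mul, eval_C, eval_C, sub_eq_zero] at this
      exact this
    have hev2 : lam * (derivative P).eval x = v * (derivative D).eval x := by
      have := hder
      rw [hN, NN] at this
      rw [IsRoot, derivative_sub, derivative_C_mul, derivative_C_mul,
        eval_sub, eval_mul, eval_mul, eval_C, eval_C, sub_eq_zero] at this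
      exact this
    have hWx : W.IsRoot x := by
      have : lam * W.eval x = 0 := by
        rw [hW, eval_sub, eval_mul, eval_mul]
        linear_combination D.eval x * hev2 - (derivative D).eval x * hev1
      rw [IsRoot]
      exact (mul_eq_zero.mp this).resolve_left hlam0
    have hDx : D.eval x ≠ 0 := by
      intro hDx0
      have hPx : P.eval x = 0 := by
        have : lam * P.eval x = 0 := by rw [hev1, hDx0, mul_zero]
        exact (mul_eq_zero.mp this).resolve_left hlam0
      exact hnocommon x ⟨hPx, hDx0⟩
    have : v ∈ T := by
      rw [hT, Finset.mem_image]
      refine ⟨x, Multiset.mem_toFinset.mpr ((mem_roots hW0).mpr hWx), ?_⟩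
      rw [div_eq_iff hDx]
      linear_combination hev1
    exact hvT this
  have hnodup : N.roots.Nodup := Multiset.nodup_iff_count_le_one.mpr hcount
  have hcard : Multiset.card N.roots = k := by
    rw [splits_iff_card_roots.mp (IsAlgClosed.splits N), hNdeg]
  -- enumerate the roots
  set L : List ℂ := N.roots.toList with hL
  have hLlen : L.length = k := by rw [hL, Multiset.length_toList, hcard]
  have hLnodup : L.Nodup := by
    have h2 : ((L : List ℂ) : Multiset ℂ).Nodup := by
      rw [hL, Multiset.coe_toList]
      exact hnodup
    exact Multiset.coe_nodup.mp h2
  refine ⟨fun i => L.get (Fin.cast hLlen.symm i), ?_, ?_, ?_⟩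
  · intro i j hij
    have := List.nodup_iff_injective_get.mp hLnodup hij
    simpa [Fin.ext_iff] using this
  · intro i
    have hmem : L.get (Fin.cast hLlen.symm i) ∈ N.roots := by
      rw [← Multiset.mem_toList]
      exact List.get_mem L (Fin.cast hLlen.symm i)
    exact NN_roots_in_disk lam v α hlam hα hv _ ((mem_roots hN0).mp hmem)
  · intro i
    have hmem : L.get (Fin.cast hLlen.symm i) ∈ N.roots := by
      rw [← Multiset.mem_toList]
      exact List.get_mem L (Fin.cast hLlen.symm i)
    exact (mem_roots hN0).mp hmem

end Stmt12Aux

namespace Stmt12Aux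
open Polynomial

lemma NN_def {k : ℕ} (lam v : ℂ) (a : Fin k → ℂ) :
    NN lam v a = C lam * PP a - C v * DD a := rfl

lemma unit_mul_conj (x : ℂ) (h : ‖x‖ = 1) : x * (starRingEnd ℂ) x = 1 := by
  have hn : normSq x = 1 := by rw [← Complex.sq_norm, h]; norm_num
  rw [Complex.mul_conj, hn]
  simp

end Stmt12Aux

open Stmt12Aux Polynomial in
set_option maxHeartbeats 2000000 in
/-- Two finite Blaschke products of the same order identifying the same points of
the disk differ by a conformal automorphism of the disk. -/
theorem stmt12 (k : ℕ) (hk : 1 ≤ k) (b₁ b₂ : ℂ → ℂ)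
    (hb₁ : IsBlaschkeOf k b₁) (hb₂ : IsBlaschkeOf k b₂)
    (hsame : ∀ z ∈ unitDisk, ∀ w ∈ unitDisk, (b₁ z = b₁ w ↔ b₂ z = b₂ w)) :
    ∃ σ : ℂ → ℂ, IsBlaschkeOf 1 σ ∧ ∀ z ∈ unitDisk, b₂ z = σ (b₁ z) := by
  classical
  obtain ⟨lam₁, α₁, hlam₁, hα₁, hb₁f⟩ := hb₁
  obtain ⟨lam₂, α₂, hlam₂, hα₂, hb₂f⟩ := hb₂
  have hmem : ∀ x : ℂ, x ∈ unitDisk ↔ ‖x‖ < 1 := by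
    intro x
    rw [unitDisk, Metric.mem_ball, dist_zero_right]
  -- choose a good fiber value v
  obtain ⟨v, hv, z, hzinj, hzdisk, hzroot⟩ :=
    Stmt12Aux.exists_good_v k hk lam₁ α₁ hlam₁ hα₁
  -- b as a ratio of polynomial evaluations
  have hb1val : ∀ x : ℂ, b₁ x = lam₁ * ((PP α₁).eval x / (DD α₁).eval x) := by
    intro x
    rw [hb₁f x, Finset.prod_div_distrib, eval_PP, eval_DD]
  have hb2val : ∀ x : ℂ, b₂ x = lam₂ * ((PP α₂).eval x / (DD α₂).eval x) := by
    intro x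
    rw [hb₂f x, Finset.prod_div_distrib, eval_PP, eval_DD]
  have hb1z : ∀ i, b₁ (z i) = v := by
    intro i
    have hd := eval_DD_ne α₁ hα₁ (z i) (hzdisk i)
    have hr := hzroot i
    rw [IsRoot, NN_def, eval_sub, eval_mul, eval_mul, eval_C, eval_C, sub_eq_zero] at hr
    rw [hb1val (z i)]
    field_simp
    linear_combination hr
  set c : ℂ := b₂ (z ⟨0, hk⟩) with hc_def
  have hc : ‖c‖ < 1 := by
    rw [hc_def, hb₂f (z ⟨0, hk⟩)]
    exact blaschke_maps k hk lam₂ α₂ hlam₂ hα₂ (z ⟨0, hk⟩) (hzdisk ⟨0, hk⟩)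
  have hb2z : ∀ i, b₂ (z i) = c := by
    intro i
    refine (hsame (z i) ((hmem _).mpr (hzdisk i)) (z ⟨0, hk⟩) ((hmem _).mpr (hzdisk ⟨0, hk⟩))).mp ?_
    rw [hb1z i, hb1z ⟨0, hk⟩]
  -- the two fiber polynomials share the k distinct roots z i
  have hroot₂ : ∀ i, (NN lam₂ c α₂).IsRoot (z i) := by
    intro i
    have hd := eval_DD_ne α₂ hα₂ (z i) (hzdisk i)
    have hval := hb2z i
    rw [hb2val (z i)] at hval
    rw [IsRoot, NN_def, eval_sub, eval_mul, eval_mul, eval_C, eval_C, sub_eq_zero]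
    field_simp at hval
    linear_combination hval
  set e₁ : ℂ := (NN lam₁ v α₁).coeff k with he₁_def
  set e₂ : ℂ := (NN lam₂ c α₂).coeff k with he₂_def
  have he₁ : e₁ ≠ 0 := NN_coeff_k_ne lam₁ v α₁ hlam₁ hα₁ hv
  have he₂ : e₂ ≠ 0 := NN_coeff_k_ne lam₂ c α₂ hlam₂ hα₂ hc
  have hfac₁ : NN lam₁ v α₁ = C e₁ * PP z :=
    factor_lemma _ k (NN_natDegree lam₁ v α₁ hlam₁ hα₁ hv)
      (NN_ne_zero lam₁ v α₁ hlam₁ hα₁ hv) z hzinj hzroot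
  have hfac₂ : NN lam₂ c α₂ = C e₂ * PP z :=
    factor_lemma _ k (NN_natDegree lam₂ c α₂ hlam₂ hα₂ hc)
      (NN_ne_zero lam₂ c α₂ hlam₂ hα₂ hc) z hzinj hroot₂
  -- reflected identities
  have hrefl₁ : C ((starRingEnd ℂ) lam₁) * DD α₁ - C ((starRingEnd ℂ) v) * PP α₁
      = C ((starRingEnd ℂ) e₁) * DD z := by
    have h1 := congrArg (fun p => reflect k (Polynomial.map (starRingEnd ℂ) p)) hfac₁
    simp only [NN_def, Polynomial.map_sub, Polynomial.map_mul, Polynomial.map_C,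
      reflect_sub, reflect_C_mul, reflect_PP, reflect_DD] at h1
    exact h1
  have hrefl₂ : C ((starRingEnd ℂ) lam₂) * DD α₂ - C ((starRingEnd ℂ) c) * PP α₂
      = C ((starRingEnd ℂ) e₂) * DD z := by
    have h1 := congrArg (fun p => reflect k (Polynomial.map (starRingEnd ℂ) p)) hfac₂
    simp only [NN_def, Polynomial.map_sub, Polynomial.map_mul, Polynomial.map_C,
      reflect_sub, reflect_C_mul, reflect_PP, reflect_DD] at h1
    exact h1
  -- abbreviations
  have hlam₁0 : lam₁ ≠ 0 := fun h => by rw [h] at hlam₁; simp at hlam₁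
  have hlam₂0 : lam₂ ≠ 0 := fun h => by rw [h] at hlam₂; simp at hlam₂
  have hce₁ : (starRingEnd ℂ) e₁ ≠ 0 := fun h => he₁ (by simpa using h)
  have hce₂ : (starRingEnd ℂ) e₂ ≠ 0 := fun h => he₂ (by simpa using h)
  have hl₁ : lam₁ * (starRingEnd ℂ) lam₁ = 1 := unit_mul_conj lam₁ hlam₁
  have hl₂ : lam₂ * (starRingEnd ℂ) lam₂ = 1 := unit_mul_conj lam₂ hlam₂
  -- the rotation μ
  set μ : ℂ := (e₂ * lam₁ * (starRingEnd ℂ) e₁) / (lam₂ * (starRingEnd ℂ) e₂ * e₁) with hμ_def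
  have habse₁ : ‖e₁‖ ≠ 0 := norm_ne_zero_iff.mpr he₁
  have habse₂ : ‖e₂‖ ≠ 0 := norm_ne_zero_iff.mpr he₂
  have hμabs : ‖μ‖ = 1 := by
    rw [hμ_def, norm_div, norm_mul, norm_mul, norm_mul, norm_mul,
      Complex.norm_conj, Complex.norm_conj, hlam₁, hlam₂]
    field_simp
  have hμ0 : μ ≠ 0 := fun h => by rw [h] at hμabs; simp at hμabs
  have hμ1 : μ * (starRingEnd ℂ) μ = 1 := unit_mul_conj μ hμabs
  -- the Möbius data
  have hA : μ - c * (starRingEnd ℂ) v ≠ 0 := by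
    intro h
    have h2 : μ = c * (starRingEnd ℂ) v := by linear_combination h
    have := congrArg (‖·‖) h2
    rw [hμabs, norm_mul, Complex.norm_conj] at this
    nlinarith [norm_nonneg c, norm_nonneg v]
  have hB : (1 : ℂ) - (starRingEnd ℂ) c * μ * v ≠ 0 := by
    apply one_sub_ne'
    rw [norm_mul, norm_mul, Complex.norm_conj, hμabs]
    nlinarith [norm_nonneg c, norm_nonneg v]
  set αc : ℂ := (μ * v - c) / (μ - c * (starRingEnd ℂ) v) with hαc_def
  set lamσ : ℂ := (μ - c * (starRingEnd ℂ) v) / (1 - (starRingEnd ℂ) c * μ * v) with hlamσ_def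
  have hnormμ : normSq μ = 1 := by rw [← Complex.sq_norm, hμabs]; norm_num
  have habsα : ‖αc‖ < 1 := by
    rw [hαc_def, norm_div, div_lt_one (norm_pos_iff.mpr hA)]
    apply abs_lt_abs_of_normSq
    rw [Complex.normSq_sub, Complex.normSq_sub]
    have hre : (μ * v * (starRingEnd ℂ) c).re
        = (μ * (starRingEnd ℂ) (c * (starRingEnd ℂ) v)).re := by
      rw [map_mul, Complex.conj_conj]
      ring_nf
    rw [Complex.normSq_mul, Complex.normSq_mul, Complex.normSq_conj, hnormμ, hre]
    have h1 := normSq_lt_one hv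
    have h2 := normSq_lt_one hc
    nlinarith [normSq_nonneg v, normSq_nonneg c]
  have hlamσnum : μ - c * (starRingEnd ℂ) v
      = μ * (starRingEnd ℂ) (1 - (starRingEnd ℂ) c * μ * v) := by
    rw [map_sub, map_one, map_mul, map_mul, Complex.conj_conj]
    linear_combination (c * (starRingEnd ℂ) v) * hμ1
  have habsσ : ‖lamσ‖ = 1 := by
    rw [hlamσ_def, hlamσnum, norm_div, norm_mul, Complex.norm_conj, hμabs, one_mul]
    exact div_self (norm_ne_zero_iff.mpr hB)
  -- the automorphism σ
  refine ⟨fun u => lamσ * ((u - αc) / (1 - (starRingEnd ℂ) αc * u)), ?_, ?_⟩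
  · exact ⟨lamσ, fun _ => αc, habsσ, fun _ => habsα,
      fun u => by rw [Fin.prod_univ_one]⟩
  -- the pointwise identity
  intro x hxmem
  have hx : ‖x‖ < 1 := (hmem x).mp hxmem
  set u : ℂ := b₁ x with hu_def
  set w : ℂ := b₂ x with hw_def
  have hu_abs : ‖u‖ < 1 := by
    rw [hu_def, hb₁f x]
    exact blaschke_maps k hk lam₁ α₁ hlam₁ hα₁ x hx
  set p₁ : ℂ := (PP α₁).eval x with hp₁_def
  set d₁ : ℂ := (DD α₁).eval x with hd₁_def
  set p₂ : ℂ := (PP α₂).eval x with hp₂_def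
  set d₂ : ℂ := (DD α₂).eval x with hd₂_def
  set q : ℂ := (PP z).eval x with hq_def
  set qs : ℂ := (DD z).eval x with hqs_def
  have hd₁ : d₁ ≠ 0 := eval_DD_ne α₁ hα₁ x hx
  have hd₂ : d₂ ≠ 0 := eval_DD_ne α₂ hα₂ x hx
  have hqs : qs ≠ 0 := eval_DD_ne z hzdisk x hx
  -- the four evaluation identities
  have ht1 : lam₁ * p₁ - v * d₁ = e₁ * q := by
    have h := congrArg (Polynomial.eval x) hfac₁
    rw [NN_def, eval_sub, eval_mul, eval_mul, eval_C, eval_C, eval_mul, eval_C] at h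
    exact h
  have ht1' : lam₂ * p₂ - c * d₂ = e₂ * q := by
    have h := congrArg (Polynomial.eval x) hfac₂
    rw [NN_def, eval_sub, eval_mul, eval_mul, eval_C, eval_C, eval_mul, eval_C] at h
    exact h
  have ht2 : (starRingEnd ℂ) lam₁ * d₁ - (starRingEnd ℂ) v * p₁
      = (starRingEnd ℂ) e₁ * qs := by
    have h := congrArg (Polynomial.eval x) hrefl₁
    rw [eval_sub, eval_mul, eval_mul, eval_C, eval_C, eval_mul, eval_C] at h
    exact h
  have ht2' : (starRingEnd ℂ) lam₂ * d₂ - (starRingEnd ℂ) c * p₂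
      = (starRingEnd ℂ) e₂ * qs := by
    have h := congrArg (Polynomial.eval x) hrefl₂
    rw [eval_sub, eval_mul, eval_mul, eval_C, eval_C, eval_mul, eval_C] at h
    exact h
  -- linear combinations
  set Xq : ℂ := e₁ * q with hXq_def
  set Yq : ℂ := lam₁ * (starRingEnd ℂ) e₁ * qs with hYq_def
  set Xq₂ : ℂ := e₂ * q with hXq₂_def
  set Yq₂ : ℂ := lam₂ * (starRingEnd ℂ) e₂ * qs with hYq₂_def
  have hYq0 : Yq ≠ 0 := mul_ne_zero (mul_ne_zero hlam₁0 hce₁) hqs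
  have hYq₂0 : Yq₂ ≠ 0 := mul_ne_zero (mul_ne_zero hlam₂0 hce₂) hqs
  have hXY : Xq₂ * Yq = μ * (Xq * Yq₂) := by
    rw [hXq_def, hYq_def, hXq₂_def, hYq₂_def, hμ_def]
    field_simp
  have hd1c : Yq + (starRingEnd ℂ) v * Xq = d₁ * (1 - v * (starRingEnd ℂ) v) := by
    rw [hYq_def, hXq_def]
    linear_combination -lam₁ * ht2 - (starRingEnd ℂ) v * ht1 + d₁ * hl₁
  have hp1c : Xq + v * Yq = lam₁ * p₁ * (1 - v * (starRingEnd ℂ) v) := by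
    rw [hYq_def, hXq_def]
    linear_combination -ht1 - v * lam₁ * ht2 + v * d₁ * hl₁
  have hud : u * d₁ = lam₁ * p₁ := by
    rw [hu_def, hb1val x, ← hp₁_def, ← hd₁_def]
    field_simp
  have hwd : w * d₂ = lam₂ * p₂ := by
    rw [hw_def, hb2val x, ← hp₂_def, ← hd₂_def]
    field_simp
  have huu : u * (Yq + (starRingEnd ℂ) v * Xq) = Xq + v * Yq := by
    linear_combination u * hd1c + (1 - v * (starRingEnd ℂ) v) * hud - hp1c
  have hd2c : Yq₂ + (starRingEnd ℂ) c * Xq₂ = d₂ * (1 - c * (starRingEnd ℂ) c) := by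
    rw [hYq₂_def, hXq₂_def]
    linear_combination -lam₂ * ht2' - (starRingEnd ℂ) c * ht1' + d₂ * hl₂
  have hp2c : Xq₂ + c * Yq₂ = lam₂ * p₂ * (1 - c * (starRingEnd ℂ) c) := by
    rw [hYq₂_def, hXq₂_def]
    linear_combination -ht1' - c * lam₂ * ht2' + c * d₂ * hl₂
  have hww : w * (Yq₂ + (starRingEnd ℂ) c * Xq₂) = Xq₂ + c * Yq₂ := by
    linear_combination w * hd2c + (1 - c * (starRingEnd ℂ) c) * hwd - hp2c
  have hw2 : w * (Yq + (starRingEnd ℂ) c * μ * Xq) = μ * Xq + c * Yq := by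
    refine mul_left_cancel₀ hYq₂0 ?_
    linear_combination Yq * hww + (1 - w * (starRingEnd ℂ) c) * hXY
  have hαA : αc * (μ - c * (starRingEnd ℂ) v) = μ * v - c := div_mul_cancel₀ _ hA
  have hᾱA : (starRingEnd ℂ) αc * ((starRingEnd ℂ) μ - (starRingEnd ℂ) c * v)
      = (starRingEnd ℂ) μ * (starRingEnd ℂ) v - (starRingEnd ℂ) c := by
    have h := congrArg (starRingEnd ℂ) hαA
    simpa [map_mul, map_sub, Complex.conj_conj] using h
  have ha' : (u - αc) * ((Yq + (starRingEnd ℂ) v * Xq) * (μ - c * (starRingEnd ℂ) v))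
      = (1 - v * (starRingEnd ℂ) v) * (μ * Xq + c * Yq) := by
    linear_combination (μ - c * (starRingEnd ℂ) v) * huu - (Yq + (starRingEnd ℂ) v * Xq) * hαA
  have hb' : (1 - (starRingEnd ℂ) αc * u)
        * ((Yq + (starRingEnd ℂ) v * Xq) * ((starRingEnd ℂ) μ - (starRingEnd ℂ) c * v))
      = (1 - v * (starRingEnd ℂ) v) * ((starRingEnd ℂ) μ * Yq + (starRingEnd ℂ) c * Xq) := by
    linear_combination (-((starRingEnd ℂ) αc) * ((starRingEnd ℂ) μ - (starRingEnd ℂ) c * v)) * huu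
      + (-(Xq + v * Yq)) * hᾱA
  have hS' : w * (1 - (starRingEnd ℂ) c * μ * v) * ((starRingEnd ℂ) μ * Yq + (starRingEnd ℂ) c * Xq)
      = (μ * Xq + c * Yq) * ((starRingEnd ℂ) μ - (starRingEnd ℂ) c * v) := by
    refine mul_left_cancel₀ hμ0 ?_
    linear_combination (1 - (starRingEnd ℂ) c * μ * v) * hw2
      + (w * (1 - (starRingEnd ℂ) c * μ * v) * Yq - (μ * Xq + c * Yq)) * hμ1
  have h1vv : (1 : ℂ) - v * (starRingEnd ℂ) v ≠ 0 := by
    apply one_sub_ne'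
    rw [norm_mul, Complex.norm_conj]
    nlinarith [norm_nonneg v]
  have hKne : Yq + (starRingEnd ℂ) v * Xq ≠ 0 := by
    rw [hd1c]
    exact mul_ne_zero hd₁ h1vv
  have hμc : (starRingEnd ℂ) μ - (starRingEnd ℂ) c * v ≠ 0 := by
    intro h
    apply hA
    have h2 := congrArg (starRingEnd ℂ) h
    simpa [map_sub, map_mul, Complex.conj_conj] using h2
  have h1u : 1 - (starRingEnd ℂ) αc * u ≠ 0 := by
    apply one_sub_ne'
    rw [norm_mul, Complex.norm_conj]
    nlinarith [norm_nonneg αc, norm_nonneg u, habsα, hu_abs]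
  have hbig : ((Yq + (starRingEnd ℂ) v * Xq) * (((starRingEnd ℂ) μ - (starRingEnd ℂ) c * v) * (μ - c * (starRingEnd ℂ) v)))
        * (w * (1 - (starRingEnd ℂ) αc * u) * (1 - (starRingEnd ℂ) c * μ * v))
      = ((Yq + (starRingEnd ℂ) v * Xq) * (((starRingEnd ℂ) μ - (starRingEnd ℂ) c * v) * (μ - c * (starRingEnd ℂ) v)))
        * ((μ - c * (starRingEnd ℂ) v) * (u - αc)) := by
    linear_combination (w * (1 - (starRingEnd ℂ) c * μ * v) * (μ - c * (starRingEnd ℂ) v)) * hb'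
      - ((μ - c * (starRingEnd ℂ) v) * ((starRingEnd ℂ) μ - (starRingEnd ℂ) c * v)) * ha'
      + ((1 - v * (starRingEnd ℂ) v) * (μ - c * (starRingEnd ℂ) v)) * hS'
  have hkey : w * (1 - (starRingEnd ℂ) αc * u) * (1 - (starRingEnd ℂ) c * μ * v)
      = (μ - c * (starRingEnd ℂ) v) * (u - αc) :=
    mul_left_cancel₀ (mul_ne_zero hKne (mul_ne_zero hμc hA)) hbig
  show w = lamσ * ((u - αc) / (1 - (starRingEnd ℂ) αc * u))
  have hgoal : lamσ * ((u - αc) / (1 - (starRingEnd ℂ) αc * u)) = w := by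
    rw [hlamσ_def, div_mul_div_comm, div_eq_iff (mul_ne_zero hB h1u)]
    linear_combination -hkey
  exact hgoal.symm
end
end

section
/- Let f be analytic on the open unit disk 𝔻 and exactly n-to-one onto its image (every w ∈ f(𝔻) has exactly n preimages in 𝔻 counted with multiplicity, n ≥ 1), and suppose f = f̃₁ ∘ φ₁ = f̃₂ ∘ φ₂ where φ₁, φ₂ are finite Blaschke products of order n and f̃₁, f̃₂ are analytic and one-to-one on 𝔻. Then there exists a conformal automorphism σ of 𝔻 such that φ₂ = σ ∘ φ₁ and f̃₂ = f̃₁ ∘ σ⁻¹ on 𝔻; that is, the factorization of an exactly n-to-one analytic function into a univalent function composed with a finite Blaschke product is unique up to a conformal automorphism of the disk. -/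
open Complex Metric

noncomputable section

open Set Filter Polynomial
open scoped Topology

namespace Stmt13Aux


lemma mem_unitDisk {z : ℂ} : z ∈ unitDisk ↔ ‖z‖ < 1 := by
  simp [unitDisk, mem_ball_zero_iff]

lemma isOpen_unitDisk : IsOpen unitDisk := isOpen_ball

lemma normSq_identity (α z : ℂ) :
    normSq (1 - (starRingEnd ℂ) α * z) - normSq (z - α) = (1 - normSq α) * (1 - normSq z) := by
  simp [normSq_apply, mul_re, mul_im, conj_re, conj_im, sub_re, sub_im, one_re, one_im]
  ring

lemma normSq_lt_one {z : ℂ} (h : ‖z‖ < 1) : normSq z < 1 := by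
  have := Complex.sq_norm z
  nlinarith [norm_nonneg z]

lemma key_lt {α z : ℂ} (hα : ‖α‖ < 1) (hz : ‖z‖ < 1) :
    ‖(z - α)‖ < ‖(1 - (starRingEnd ℂ) α * z)‖ := by
  have h : normSq (z - α) < normSq (1 - (starRingEnd ℂ) α * z) := by
    have h1 := normSq_identity α z
    have h2 := normSq_lt_one hα
    have h3 := normSq_lt_one hz
    nlinarith
  have := Real.sqrt_lt_sqrt (normSq_nonneg _) h
  rwa [← Complex.norm_def, ← Complex.norm_def] at this

lemma key_ge {α z : ℂ} (hα : ‖α‖ < 1) (hz : 1 ≤ ‖z‖) :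
    ‖(1 - (starRingEnd ℂ) α * z)‖ ≤ ‖(z - α)‖ := by
  have h : normSq (1 - (starRingEnd ℂ) α * z) ≤ normSq (z - α) := by
    have h1 := normSq_identity α z
    have h2 := normSq_lt_one hα
    have h3 : (1:ℝ) ≤ normSq z := by
      have := Complex.sq_norm z
      nlinarith
    nlinarith
  have := Real.sqrt_le_sqrt h
  rwa [← Complex.norm_def, ← Complex.norm_def] at this

lemma denom_pos {α z : ℂ} (hα : ‖α‖ < 1) (hz : ‖z‖ < 1) :
    0 < ‖(1 - (starRingEnd ℂ) α * z)‖ :=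
  lt_of_le_of_lt (norm_nonneg _) (key_lt hα hz)

lemma denom_ne_zero {α z : ℂ} (hα : ‖α‖ < 1) (hz : ‖z‖ < 1) :
    (1 - (starRingEnd ℂ) α * z) ≠ 0 := by
  intro h
  have := denom_pos hα hz
  rw [h] at this; simp at this

lemma factor_lt_one {α z : ℂ} (hα : ‖α‖ < 1) (hz : ‖z‖ < 1) :
    ‖((z - α) / (1 - (starRingEnd ℂ) α * z))‖ < 1 := by
  rw [norm_div]
  exact (div_lt_one (denom_pos hα hz)).2 (key_lt hα hz)

lemma blaschke_mem {n : ℕ} (hn : 1 ≤ n) {lam : ℂ} {α : Fin n → ℂ}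
    (hlam : ‖lam‖ = 1) (hα : ∀ j, ‖(α j)‖ < 1) {z : ℂ}
    (hz : ‖z‖ < 1) :
    ‖(lam * ∏ j, (z - α j) / (1 - (starRingEnd ℂ) (α j) * z))‖ < 1 := by
  have j₀ : Fin n := ⟨0, hn⟩
  rw [norm_mul, hlam, one_mul, norm_prod]
  rw [← Finset.mul_prod_erase Finset.univ _ (Finset.mem_univ j₀)]
  have h1 : ∏ j ∈ Finset.univ.erase j₀, ‖((z - α j) / (1 - (starRingEnd ℂ) (α j) * z))‖ ≤ 1 :=
    Finset.prod_le_one (fun j _ => norm_nonneg _) (fun j _ => (factor_lt_one (hα j) hz).le)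
  calc ‖((z - α j₀) / (1 - (starRingEnd ℂ) (α j₀) * z))‖ *
        ∏ j ∈ Finset.univ.erase j₀, ‖((z - α j) / (1 - (starRingEnd ℂ) (α j) * z))‖
      ≤ ‖((z - α j₀) / (1 - (starRingEnd ℂ) (α j₀) * z))‖ * 1 :=
        mul_le_mul_of_nonneg_left h1 (norm_nonneg _)
    _ < 1 := by rw [mul_one]; exact factor_lt_one (hα j₀) hz


open Polynomial

variable {n : ℕ} (α : Fin n → ℂ)

/-- numerator polynomial -/
def P (α : Fin n → ℂ) : ℂ[X] := ∏ j, (X - C (α j))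
/-- denominator polynomial -/
def Q (α : Fin n → ℂ) : ℂ[X] := ∏ j, (1 - C ((starRingEnd ℂ) (α j)) * X)

lemma evalP (z : ℂ) : (P α).eval z = ∏ j, (z - α j) := by
  simp [P, eval_prod]

lemma evalQ (z : ℂ) : (Q α).eval z = ∏ j, (1 - (starRingEnd ℂ) (α j) * z) := by
  simp [Q, eval_prod]

lemma blaschke_eq (lam z : ℂ) :
    lam * ∏ j, (z - α j) / (1 - (starRingEnd ℂ) (α j) * z)
      = lam * ((P α).eval z / (Q α).eval z) := by
  rw [evalP, evalQ, Finset.prod_div_distrib]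

lemma coeffP : (P α).coeff n = 1 := by
  have h : (P α).Monic := monic_prod_of_monic _ _ (fun j _ => monic_X_sub_C (α j))
  have hdeg : (P α).natDegree = n := by
    simp [P, natDegree_prod_of_monic _ _ (fun j _ => monic_X_sub_C (α j))]
  have := h.coeff_natDegree
  rwa [hdeg] at this

lemma natDegree_factor_le (j : Fin n) :
    (1 - C ((starRingEnd ℂ) (α j)) * X : ℂ[X]).natDegree ≤ 1 := by
  refine le_trans (natDegree_sub_le _ _) (max_le (by simp)
    (le_trans (natDegree_C_mul_le _ _) (by simp)))

lemma coeffQ : (Q α).coeff n = ∏ j, (-(starRingEnd ℂ) (α j)) := by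
  have h := coeff_prod_of_natDegree_le (s := Finset.univ)
    (f := fun j : Fin n => (1 - C ((starRingEnd ℂ) (α j)) * X : ℂ[X])) 1
    (fun j _ => natDegree_factor_le α j)
  simp only [Finset.card_univ, Fintype.card_fin, mul_one] at h
  rw [Q, h]
  congr 1; ext j
  simp [coeff_sub, coeff_one]

lemma natDegreeQ_le : (Q α).natDegree ≤ n := by
  refine le_trans (natDegree_prod_le _ _) ?_
  calc ∑ j, (1 - C ((starRingEnd ℂ) (α j)) * X : ℂ[X]).natDegree ≤ ∑ _j : Fin n, 1 :=
        Finset.sum_le_sum (fun j _ => natDegree_factor_le α j)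
    _ = n := by simp

lemma blaschke_surj {n : ℕ} (hn : 1 ≤ n) {lam : ℂ} {α : Fin n → ℂ}
    (hlam : ‖lam‖ = 1) (hα : ∀ j, ‖(α j)‖ < 1) {w : ℂ}
    (hw : ‖w‖ < 1) :
    ∃ z, ‖z‖ < 1 ∧ lam * ∏ j, (z - α j) / (1 - (starRingEnd ℂ) (α j) * z) = w := by
  classical
  set R : ℂ[X] := C lam * P α - C w * Q α with hR
  have habsprod : ‖(w * ∏ j, (-(starRingEnd ℂ) (α j)))‖ < 1 := by
    rw [norm_mul, norm_prod]
    have h1 : ∏ j, ‖(-(starRingEnd ℂ) (α j))‖ ≤ 1 := by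
      refine Finset.prod_le_one (fun j _ => norm_nonneg _) (fun j _ => ?_)
      simp only [norm_neg, Complex.norm_conj]
      exact (hα j).le
    calc ‖w‖ * ∏ j, ‖(-(starRingEnd ℂ) (α j))‖
        ≤ ‖w‖ * 1 := mul_le_mul_of_nonneg_left h1 (norm_nonneg _)
      _ < 1 := by rwa [mul_one]
  have hcoeff : R.coeff n ≠ 0 := by
    rw [hR, coeff_sub, coeff_C_mul, coeff_C_mul, coeffP, coeffQ, mul_one]
    refine sub_ne_zero.mpr ?_
    intro h
    rw [← h, hlam] at habsprod
    exact lt_irrefl 1 habsprod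
  have hdeg : 0 < R.degree := by
    have h1 : (n : WithBot ℕ) ≤ R.degree := le_degree_of_ne_zero hcoeff
    have h2 : (0 : WithBot ℕ) < (n : WithBot ℕ) := by exact_mod_cast hn
    exact lt_of_lt_of_le h2 h1
  obtain ⟨z, hz⟩ := Complex.exists_root hdeg
  have heval : lam * (P α).eval z = w * (Q α).eval z := by
    have h1 : R.eval z = 0 := hz
    rw [hR] at h1
    simp only [eval_sub, eval_mul, eval_C] at h1
    exact sub_eq_zero.mp h1
  have habs : ‖z‖ < 1 := by
    by_contra hzc
    push_neg at hzc
    by_cases hQ : (Q α).eval z = 0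
    · rw [evalQ] at hQ
      obtain ⟨j, -, hj⟩ := Finset.prod_eq_zero_iff.mp hQ
      have hP : (P α).eval z ≠ 0 := by
        rw [evalP]
        refine Finset.prod_ne_zero_iff.mpr (fun j _ => ?_)
        refine sub_ne_zero.mpr (fun h => ?_)
        rw [h] at hzc
        exact absurd (lt_of_lt_of_le (hα _) hzc) (lt_irrefl _)
      have hlamne : lam ≠ 0 := by
        intro h; rw [h] at hlam; simp at hlam
      rw [evalQ, hQ, mul_zero] at heval
      exact (mul_ne_zero hlamne hP) heval
    · have hQfac : ∀ j : Fin n, (1 - (starRingEnd ℂ) (α j) * z) ≠ 0 := by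
        rw [evalQ] at hQ
        exact fun j => Finset.prod_ne_zero_iff.mp hQ j (Finset.mem_univ j)
      have hQpos : 0 < ∏ j, ‖(1 - (starRingEnd ℂ) (α j) * z)‖ :=
        Finset.prod_pos (fun j _ => norm_pos_iff.mpr (hQfac j))
      have hge : ∏ j, ‖(1 - (starRingEnd ℂ) (α j) * z)‖
          ≤ ∏ j, ‖(z - α j)‖ :=
        Finset.prod_le_prod (fun j _ => norm_nonneg _) (fun j _ => key_ge (hα j) hzc)
      have heq : ∏ j, ‖(z - α j)‖
          = ‖w‖ * ∏ j, ‖(1 - (starRingEnd ℂ) (α j) * z)‖ := by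
        have := congrArg (‖·‖) heval
        rwa [norm_mul, norm_mul, hlam, one_mul, evalP, evalQ, norm_prod, norm_prod] at this
      nlinarith
  refine ⟨z, habs, ?_⟩
  have hQne : (Q α).eval z ≠ 0 := by
    rw [evalQ]
    exact Finset.prod_ne_zero_iff.mpr (fun j _ => denom_ne_zero (hα j) habs)
  rw [blaschke_eq, ← mul_div_assoc, heval, mul_div_assoc, div_self hQne, mul_one]

lemma blaschke_diffOn {n : ℕ} (lam : ℂ) {α : Fin n → ℂ} (hα : ∀ j, ‖(α j)‖ < 1) :
    DifferentiableOn ℂ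
      (fun z => lam * ∏ j, (z - α j) / (1 - (starRingEnd ℂ) (α j) * z)) unitDisk := by
  have hfun : (fun z => lam * ∏ j, (z - α j) / (1 - (starRingEnd ℂ) (α j) * z))
      = fun z => lam * ((P α).eval z / (Q α).eval z) := funext fun z => blaschke_eq α lam z
  rw [hfun]
  intro z hz
  have hQ : (Q α).eval z ≠ 0 := by
    rw [evalQ]
    exact Finset.prod_ne_zero_iff.mpr fun j _ => denom_ne_zero (hα j) (mem_unitDisk.mp hz)
  exact ((differentiableAt_const _).mul
    (((P α).differentiableAt).div ((Q α).differentiableAt) hQ)).differentiableWithinAt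

lemma factor_through (φ₁ φ₂ : ℂ → ℂ)
    (h₁d : DifferentiableOn ℂ φ₁ unitDisk) (h₂d : DifferentiableOn ℂ φ₂ unitDisk)
    (h₁surj : ∀ w ∈ unitDisk, ∃ z ∈ unitDisk, φ₁ z = w)
    (h₂maps : Set.MapsTo φ₂ unitDisk unitDisk)
    (hwd : ∀ z ∈ unitDisk, ∀ z' ∈ unitDisk, φ₁ z = φ₁ z' → φ₂ z = φ₂ z') :
    ∃ s : ℂ → ℂ, DifferentiableOn ℂ s unitDisk ∧ Set.MapsTo s unitDisk unitDisk ∧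
      ∀ z ∈ unitDisk, s (φ₁ z) = φ₂ z := by
  classical
  set s : ℂ → ℂ := fun w => if h : ∃ z, z ∈ unitDisk ∧ φ₁ z = w then φ₂ h.choose else 0 with hsdef
  have key : ∀ w (z : ℂ), z ∈ unitDisk → φ₁ z = w → s w = φ₂ z := by
    intro w z hz hzw
    have hex : ∃ z, z ∈ unitDisk ∧ φ₁ z = w := ⟨z, hz, hzw⟩
    rw [hsdef]
    simp only [dif_pos hex]
    exact hwd _ hex.choose_spec.1 z hz (by rw [hex.choose_spec.2, hzw])
  have sEq : ∀ z ∈ unitDisk, s (φ₁ z) = φ₂ z := fun z hz => key _ z hz rfl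
  have sMaps : Set.MapsTo s unitDisk unitDisk := by
    intro w hw
    obtain ⟨z, hz, hzw⟩ := h₁surj w hw
    rw [key w z hz hzw]
    exact h₂maps hz
  have h₁a : AnalyticOnNhd ℂ φ₁ unitDisk := h₁d.analyticOnNhd isOpen_unitDisk
  have hnc : ∀ z₀ ∈ unitDisk, ¬ (∀ᶠ z in 𝓝 z₀, φ₁ z = φ₁ z₀) := by
    intro z₀ hz₀ hev
    have heqon : Set.EqOn φ₁ (fun _ => φ₁ z₀) unitDisk :=
      h₁a.eqOn_of_preconnected_of_eventuallyEq analyticOnNhd_const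
        ((convex_ball (0:ℂ) 1).isPreconnected) hz₀ hev
    obtain ⟨za, hza, hza'⟩ := h₁surj 0 (by rw [mem_unitDisk]; norm_num)
    obtain ⟨zb, hzb, hzb'⟩ := h₁surj (1/2) (by rw [mem_unitDisk]; norm_num)
    have h : (0:ℂ) = 1/2 := by
      rw [← hza', ← hzb', heqon hza, heqon hzb]
    norm_num at h
  have hmap : ∀ z₀ ∈ unitDisk, 𝓝 (φ₁ z₀) ≤ Filter.map φ₁ (𝓝 z₀) := by
    intro z₀ hz₀
    rcases (h₁a z₀ hz₀).eventually_constant_or_nhds_le_map_nhds with h | h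
    · exact absurd h (hnc z₀ hz₀)
    · exact h
  have hcont : ∀ w₀ (z₀ : ℂ), z₀ ∈ unitDisk → φ₁ z₀ = w₀ → ContinuousAt s w₀ := by
    intro w₀ z₀ hz₀ hzw
    rw [ContinuousAt, key w₀ z₀ hz₀ hzw, Filter.tendsto_def]
    intro W hW
    have hφ₂c : ContinuousAt φ₂ z₀ :=
      (h₂d.differentiableAt (isOpen_unitDisk.mem_nhds hz₀)).continuousAt
    have hU : unitDisk ∩ φ₂ ⁻¹' W ∈ 𝓝 z₀ :=
      Filter.inter_mem (isOpen_unitDisk.mem_nhds hz₀) (hφ₂c hW)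
    have himg : φ₁ '' (unitDisk ∩ φ₂ ⁻¹' W) ∈ 𝓝 w₀ := by
      rw [← hzw]
      exact hmap z₀ hz₀ (Filter.image_mem_map hU)
    refine Filter.mem_of_superset himg ?_
    rintro w ⟨z, ⟨hz, hzW⟩, rfl⟩
    exact Set.mem_preimage.mpr (by rw [key _ z hz rfl]; exact hzW)
  have gooddiff : ∀ (w₀ z₀ : ℂ), z₀ ∈ unitDisk → φ₁ z₀ = w₀ → deriv φ₁ z₀ ≠ 0 →
      DifferentiableAt ℂ s w₀ := by
    intro w₀ z₀ hz₀ hzw hderiv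
    subst hzw
    obtain ⟨p, hp⟩ := h₁a z₀ hz₀
    have hstrict0 := hp.hasStrictDerivAt
    have hstrict : HasStrictDerivAt φ₁ (deriv φ₁ z₀) z₀ := by
      rwa [← hstrict0.hasDerivAt.deriv] at hstrict0
    set g := hstrict.localInverse φ₁ (deriv φ₁ z₀) z₀ hderiv with hg
    have F := hstrict.hasStrictFDerivAt_equiv hderiv
    have hginv : ∀ᶠ w in 𝓝 (φ₁ z₀), φ₁ (g w) = w := F.eventually_right_inverse
    have hgc : ContinuousAt g (φ₁ z₀) := F.localInverse_continuousAt
    have hgz : g (φ₁ z₀) = z₀ := F.localInverse_apply_image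
    have hgd : DifferentiableAt ℂ g (φ₁ z₀) :=
      (hstrict.to_localInverse hderiv).hasDerivAt.differentiableAt
    have ev1 : ∀ᶠ w in 𝓝 (φ₁ z₀), g w ∈ unitDisk :=
      hgc.eventually_mem (isOpen_unitDisk.mem_nhds (by rw [hgz]; exact hz₀))
    have hev : s =ᶠ[𝓝 (φ₁ z₀)] fun w => φ₂ (g w) := by
      filter_upwards [ev1, hginv] with w h1 h2
      exact key w (g w) h1 h2
    have hcomp : DifferentiableAt ℂ (fun w => φ₂ (g w)) (φ₁ z₀) := by
      have h2 : DifferentiableAt ℂ φ₂ (g (φ₁ z₀)) := by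
        rw [hgz]
        exact h₂d.differentiableAt (isOpen_unitDisk.mem_nhds hz₀)
      exact h2.comp _ hgd
    exact hev.differentiableAt_iff.mpr hcomp
  have sDiff : ∀ w₀ ∈ unitDisk, DifferentiableAt ℂ s w₀ := by
    intro w₀ hw₀
    obtain ⟨z₀, hz₀, hzw⟩ := h₁surj w₀ hw₀
    have hda : AnalyticOnNhd ℂ (deriv φ₁) unitDisk := h₁a.deriv
    rcases (hda z₀ hz₀).eventually_eq_zero_or_eventually_ne_zero with hzero | hne
    · exfalso
      apply hnc z₀ hz₀
      obtain ⟨r, hr, hball⟩ := Metric.eventually_nhds_iff_ball.mp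
        (hzero.and (isOpen_unitDisk.eventually_mem hz₀))
      refine Metric.eventually_nhds_iff_ball.mpr ⟨r, hr, ?_⟩
      intro z hz
      refine (convex_ball z₀ r).is_const_of_fderivWithin_eq_zero
        (h₁d.mono (fun y hy => (hball y hy).2)) ?_ hz (mem_ball_self hr)
      intro x hx
      have hdx : deriv φ₁ x = 0 := (hball x hx).1
      have hdiffx : DifferentiableAt ℂ φ₁ x :=
        h₁d.differentiableAt (isOpen_unitDisk.mem_nhds (hball x hx).2)
      have h0 : HasDerivAt φ₁ 0 x := hdx ▸ hdiffx.hasDerivAt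
      have hf0 : fderiv ℂ φ₁ x = ContinuousLinearMap.smulRight (1 : ℂ →L[ℂ] ℂ) (0:ℂ) :=
        h0.hasFDerivAt.fderiv
      rw [fderivWithin_of_isOpen isOpen_ball hx, hf0]
      exact ContinuousLinearMap.ext fun y => by simp
    · have hUev : ∀ᶠ x in 𝓝 z₀, (x ≠ z₀ → deriv φ₁ x ≠ 0) ∧ x ∈ unitDisk := by
        refine Filter.Eventually.and ?_ (isOpen_unitDisk.eventually_mem hz₀)
        exact eventually_nhdsWithin_iff.mp hne
      have hV : φ₁ '' {x | (x ≠ z₀ → deriv φ₁ x ≠ 0) ∧ x ∈ unitDisk} ∈ 𝓝 w₀ := by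
        rw [← hzw]
        exact hmap z₀ hz₀ (Filter.image_mem_map hUev)
      have hS : (φ₁ '' {x | (x ≠ z₀ → deriv φ₁ x ≠ 0) ∧ x ∈ unitDisk}) ∩ unitDisk ∈ 𝓝 w₀ :=
        Filter.inter_mem hV (isOpen_unitDisk.mem_nhds hw₀)
      have hdiffS : DifferentiableOn ℂ s
          (((φ₁ '' {x | (x ≠ z₀ → deriv φ₁ x ≠ 0) ∧ x ∈ unitDisk}) ∩ unitDisk) \ {w₀}) := by
        rintro w ⟨⟨⟨z, hzU, rfl⟩, -⟩, hwne⟩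
        have hwne' : φ₁ z ≠ w₀ := by simpa using hwne
        have hzne : z ≠ z₀ := fun h => hwne' (by rw [h, hzw])
        exact (gooddiff _ z hzU.2 rfl (hzU.1 hzne)).differentiableWithinAt
      have hres := (Complex.differentiableOn_compl_singleton_and_continuousAt_iff hS).mp
        ⟨hdiffS, hcont w₀ z₀ hz₀ hzw⟩
      exact hres.differentiableAt hS
  exact ⟨s, fun w hw => (sDiff w hw).differentiableWithinAt, sMaps, sEq⟩


def mob (a z : ℂ) : ℂ := (z - a) / (1 - (starRingEnd ℂ) a * z)

lemma mob_abs_lt {a z : ℂ} (ha : ‖a‖ < 1) (hz : ‖z‖ < 1) :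
    ‖(mob a z)‖ < 1 := factor_lt_one ha hz

lemma abs_neg' {a : ℂ} (ha : ‖a‖ < 1) : ‖(-a)‖ < 1 := by simpa

lemma mob_left_inv {a z : ℂ} (ha : ‖a‖ < 1) (hz : ‖z‖ < 1) :
    mob (-a) (mob a z) = z := by
  have hd : (1 - (starRingEnd ℂ) a * z) ≠ 0 := denom_ne_zero ha hz
  have hm : ‖(mob a z)‖ < 1 := mob_abs_lt ha hz
  have hD : (1 - (starRingEnd ℂ) (-a) * mob a z) ≠ 0 := denom_ne_zero (abs_neg' ha) hm
  show (mob a z - -a) / (1 - (starRingEnd ℂ) (-a) * mob a z) = z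
  rw [div_eq_iff hD]
  show (mob a z - -a) = z * (1 - (starRingEnd ℂ) (-a) * mob a z)
  unfold mob
  rw [map_neg]
  have e : (z - a) / (1 - (starRingEnd ℂ) a * z) * (1 - (starRingEnd ℂ) a * z) = z - a :=
    div_mul_cancel₀ _ hd
  linear_combination e

lemma mob_right_inv {a z : ℂ} (ha : ‖a‖ < 1) (hz : ‖z‖ < 1) :
    mob a (mob (-a) z) = z := by
  have := mob_left_inv (a := -a) (abs_neg' ha) hz
  rwa [neg_neg] at this

lemma mob_diffAt {a z : ℂ} (ha : ‖a‖ < 1) (hz : ‖z‖ < 1) :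
    DifferentiableAt ℂ (mob a) z := by
  have hd : (1 - (starRingEnd ℂ) a * z) ≠ 0 := denom_ne_zero ha hz
  show DifferentiableAt ℂ (fun z => (z - a) / (1 - (starRingEnd ℂ) a * z)) z
  exact DifferentiableAt.div (differentiableAt_id.sub (differentiableAt_const _))
    ((differentiableAt_const _).sub ((differentiableAt_const _).mul differentiableAt_id)) hd

lemma mob_self (a : ℂ) : mob a a = 0 := by simp [mob]

lemma mob_neg_zero (a : ℂ) : mob (-a) 0 = a := by simp [mob]

lemma classify (s t : ℂ → ℂ) (hs : DifferentiableOn ℂ s unitDisk)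
    (ht : DifferentiableOn ℂ t unitDisk)
    (hsm : Set.MapsTo s unitDisk unitDisk) (htm : Set.MapsTo t unitDisk unitDisk)
    (hts : ∀ w ∈ unitDisk, t (s w) = w) (hst : ∀ w ∈ unitDisk, s (t w) = w) :
    ∃ c a : ℂ, ‖c‖ = 1 ∧ ‖a‖ < 1 ∧
      ∀ w ∈ unitDisk, s w = c * mob a w := by
  have h0 : (0:ℂ) ∈ unitDisk := by rw [mem_unitDisk]; simp
  set a := t 0 with ha
  have haD : a ∈ unitDisk := htm h0
  have ha1 : ‖a‖ < 1 := mem_unitDisk.mp haD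
  have hsa : s a = 0 := hst 0 h0
  set g : ℂ → ℂ := fun w => s (mob (-a) w) with hgdef
  have hma : ∀ w ∈ unitDisk, mob (-a) w ∈ unitDisk := fun w hw =>
    mem_unitDisk.mpr (mob_abs_lt (abs_neg' ha1) (mem_unitDisk.mp hw))
  have hga : ∀ w ∈ unitDisk, mob a w ∈ unitDisk := fun w hw =>
    mem_unitDisk.mpr (mob_abs_lt ha1 (mem_unitDisk.mp hw))
  have hg0 : g 0 = 0 := by rw [hgdef]; simp only [mob_neg_zero, hsa]
  have hgd : DifferentiableOn ℂ g unitDisk := fun w hw =>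
    ((hs.differentiableAt (isOpen_unitDisk.mem_nhds (hma w hw))).comp w
      (mob_diffAt (abs_neg' ha1) (mem_unitDisk.mp hw))).differentiableWithinAt
  have hgm : Set.MapsTo g unitDisk unitDisk := fun w hw => hsm (hma w hw)
  set hf : ℂ → ℂ := fun z => mob a (t z) with hhdef
  have hh0 : hf 0 = 0 := by rw [hhdef]; simp only [← ha, mob_self]
  have hhd : DifferentiableOn ℂ hf unitDisk := fun z hz =>
    ((mob_diffAt ha1 (mem_unitDisk.mp (htm hz))).comp z
      (ht.differentiableAt (isOpen_unitDisk.mem_nhds hz))).differentiableWithinAt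
  have hhm : Set.MapsTo hf unitDisk unitDisk := fun z hz =>
    mem_unitDisk.mpr (mob_abs_lt ha1 (mem_unitDisk.mp (htm hz)))
  have hcomp : ∀ z ∈ unitDisk, hf (g z) = z := by
    intro z hz
    have h1 : mob (-a) z ∈ unitDisk := hma z hz
    show mob a (t (s (mob (-a) z))) = z
    rw [hts _ h1]
    exact mob_right_inv ha1 (mem_unitDisk.mp hz)
  have hgm' : Set.MapsTo g (ball (0:ℂ) 1) (ball (g 0) 1) := by rw [hg0]; exact hgm
  have hDb : ∀ z ∈ unitDisk, ‖dslope g 0 z‖ ≤ 1 := by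
    intro z hz
    have := Complex.norm_dslope_le_div_of_mapsTo_ball (c := 0) (R₁ := 1) (R₂ := 1) hgd (hgm'.mono_right Metric.ball_subset_closedBall) hz
    simpa using this
  have hz₀D : (1/2 : ℂ) ∈ unitDisk := by rw [mem_unitDisk]; norm_num
  have habs1 : ‖(g (1/2))‖ ≤ ‖(1/2 : ℂ)‖ :=
    Complex.norm_le_norm_of_mapsTo_ball_self hgd (hgm.mono_right Metric.ball_subset_closedBall) hg0 (by norm_num)
  have habs2 : ‖(1/2 : ℂ)‖ ≤ ‖(g (1/2))‖ := by
    have hgz₀D : g (1/2) ∈ unitDisk := hgm hz₀D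
    have h2 := Complex.norm_le_norm_of_mapsTo_ball_self hhd (hhm.mono_right Metric.ball_subset_closedBall) hh0 (mem_unitDisk.mp hgz₀D)
    rwa [hcomp _ hz₀D] at h2
  have heq : ‖(g (1/2))‖ = ‖(1/2 : ℂ)‖ := le_antisymm habs1 habs2
  have hDz₀ : ‖dslope g 0 (1/2 : ℂ)‖ = 1 := by
    rw [dslope_of_ne _ (by norm_num : (1/2 : ℂ) ≠ 0), slope_def_field, hg0, sub_zero, sub_zero]
    rw [norm_div]
    rw [heq]
    exact div_self (by rw [norm_div]; simp)
  have hDdiff : DifferentiableOn ℂ (dslope g 0) unitDisk :=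
    (differentiableOn_dslope (isOpen_unitDisk.mem_nhds h0)).mpr hgd
  have hmax : IsMaxOn (norm ∘ dslope g 0) unitDisk (1/2 : ℂ) := by
    intro z hz
    show ‖dslope g 0 z‖ ≤ ‖dslope g 0 (1/2 : ℂ)‖
    rw [hDz₀]
    exact hDb z hz
  have hconst := Complex.eqOn_of_isPreconnected_of_isMaxOn_norm
    ((convex_ball (0:ℂ) 1).isPreconnected) isOpen_ball hDdiff hz₀D hmax
  refine ⟨dslope g 0 (1/2 : ℂ), a, ?_, ha1, ?_⟩
  · exact hDz₀
  intro w hw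
  have hv : mob a w ∈ unitDisk := hga w hw
  have hsw : s w = g (mob a w) := by
    rw [hgdef]
    simp only
    rw [mob_left_inv ha1 (mem_unitDisk.mp hw)]
  by_cases hv0 : mob a w = 0
  · have hd := denom_ne_zero ha1 (mem_unitDisk.mp hw)
    have hwa : w = a := by
      have h2 : w - a = 0 := by
        have := (div_eq_zero_iff.mp hv0).resolve_right hd
        exact this
      linear_combination h2
    rw [hwa, hsa, mob_self, mul_zero]
  · have hcc := hconst hv
    simp only [Function.const] at hcc
    rw [dslope_of_ne _ hv0, slope_def_field, hg0, sub_zero, sub_zero] at hcc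
    rw [hsw, ← (div_eq_iff hv0).mp hcc]

end Stmt13Aux

open Stmt13Aux

/-- The factorization of an exactly `n`-to-one analytic function on the disk into a
univalent function composed with a finite Blaschke product of order `n` is unique
up to a conformal automorphism of the disk. -/
theorem stmt13 (n : ℕ) (hn : 1 ≤ n) (f φ₁ φ₂ f₁ f₂ : ℂ → ℂ)
    (hf : DifferentiableOn ℂ f unitDisk)
    (hcount : ∀ w ∈ f '' unitDisk, FiberCount f w n)
    (hφ₁ : IsBlaschkeOf n φ₁) (hφ₂ : IsBlaschkeOf n φ₂)
    (hf₁ : DifferentiableOn ℂ f₁ unitDisk) (hf₁inj : Set.InjOn f₁ unitDisk)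
    (hf₂ : DifferentiableOn ℂ f₂ unitDisk) (hf₂inj : Set.InjOn f₂ unitDisk)
    (hfac₁ : ∀ z ∈ unitDisk, f z = f₁ (φ₁ z))
    (hfac₂ : ∀ z ∈ unitDisk, f z = f₂ (φ₂ z)) :
    ∃ σ τ : ℂ → ℂ, IsBlaschkeOf 1 σ ∧ IsBlaschkeOf 1 τ ∧
      (∀ w ∈ unitDisk, σ (τ w) = w ∧ τ (σ w) = w) ∧
      (∀ z ∈ unitDisk, φ₂ z = σ (φ₁ z)) ∧
      (∀ w ∈ unitDisk, f₂ w = f₁ (τ w)) := by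
  obtain ⟨l₁, a₁, hl₁, ha₁, hB₁⟩ := hφ₁
  obtain ⟨l₂, a₂, hl₂, ha₂, hB₂⟩ := hφ₂
  have hφ₁fun : φ₁ = fun z => l₁ * ∏ j, (z - a₁ j) / (1 - (starRingEnd ℂ) (a₁ j) * z) :=
    funext hB₁
  have hφ₂fun : φ₂ = fun z => l₂ * ∏ j, (z - a₂ j) / (1 - (starRingEnd ℂ) (a₂ j) * z) :=
    funext hB₂
  have hφ₁d : DifferentiableOn ℂ φ₁ unitDisk := by
    rw [hφ₁fun]; exact blaschke_diffOn l₁ ha₁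
  have hφ₂d : DifferentiableOn ℂ φ₂ unitDisk := by
    rw [hφ₂fun]; exact blaschke_diffOn l₂ ha₂
  have hφ₁m : Set.MapsTo φ₁ unitDisk unitDisk := by
    intro z hz
    rw [mem_unitDisk, hB₁ z]
    exact blaschke_mem hn hl₁ ha₁ (mem_unitDisk.mp hz)
  have hφ₂m : Set.MapsTo φ₂ unitDisk unitDisk := by
    intro z hz
    rw [mem_unitDisk, hB₂ z]
    exact blaschke_mem hn hl₂ ha₂ (mem_unitDisk.mp hz)
  have hφ₁s : ∀ w ∈ unitDisk, ∃ z ∈ unitDisk, φ₁ z = w := by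
    intro w hw
    obtain ⟨z, hz, hzw⟩ := blaschke_surj hn hl₁ ha₁ (mem_unitDisk.mp hw)
    exact ⟨z, mem_unitDisk.mpr hz, by rw [hB₁ z]; exact hzw⟩
  have hφ₂s : ∀ w ∈ unitDisk, ∃ z ∈ unitDisk, φ₂ z = w := by
    intro w hw
    obtain ⟨z, hz, hzw⟩ := blaschke_surj hn hl₂ ha₂ (mem_unitDisk.mp hw)
    exact ⟨z, mem_unitDisk.mpr hz, by rw [hB₂ z]; exact hzw⟩
  have hwd12 : ∀ z ∈ unitDisk, ∀ z' ∈ unitDisk, φ₁ z = φ₁ z' → φ₂ z = φ₂ z' := by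
    intro z hz z' hz' h
    refine hf₂inj (hφ₂m hz) (hφ₂m hz') ?_
    rw [← hfac₂ z hz, ← hfac₂ z' hz', hfac₁ z hz, hfac₁ z' hz', h]
  have hwd21 : ∀ z ∈ unitDisk, ∀ z' ∈ unitDisk, φ₂ z = φ₂ z' → φ₁ z = φ₁ z' := by
    intro z hz z' hz' h
    refine hf₁inj (hφ₁m hz) (hφ₁m hz') ?_
    rw [← hfac₁ z hz, ← hfac₁ z' hz', hfac₂ z hz, hfac₂ z' hz', h]
  obtain ⟨s, hsd, hsm, hsEq⟩ := factor_through φ₁ φ₂ hφ₁d hφ₂d hφ₁s hφ₂m hwd12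
  obtain ⟨t, htd, htm, htEq⟩ := factor_through φ₂ φ₁ hφ₂d hφ₁d hφ₂s hφ₁m hwd21
  have hts : ∀ w ∈ unitDisk, t (s w) = w := by
    intro w hw
    obtain ⟨z, hz, hzw⟩ := hφ₁s w hw
    rw [← hzw, hsEq z hz, htEq z hz]
  have hst : ∀ w ∈ unitDisk, s (t w) = w := by
    intro w hw
    obtain ⟨z, hz, hzw⟩ := hφ₂s w hw
    rw [← hzw, htEq z hz, hsEq z hz]
  obtain ⟨c, a, hc, ha1, hseq⟩ := classify s t hsd htd hsm htm hts hst
  have hcc : (starRingEnd ℂ) c * c = 1 := by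
    have h1 := Complex.mul_conj c
    rw [mul_comm] at h1
    rw [h1, Complex.normSq_eq_norm_sq, hc]
    norm_num
  have hca : ‖(-(c * a))‖ < 1 := by
    rw [norm_neg, norm_mul, hc, one_mul]
    exact ha1
  refine ⟨fun z => c * mob a z, fun w => (starRingEnd ℂ) c * mob (-(c * a)) w, ?_, ?_, ?_, ?_, ?_⟩
  · exact ⟨c, fun _ => a, hc, fun _ => ha1, fun z => by
      rw [Fin.prod_univ_one]; rfl⟩
  · exact ⟨(starRingEnd ℂ) c, fun _ => -(c * a), by rw [Complex.norm_conj]; exact hc,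
      fun _ => hca, fun w => by rw [Fin.prod_univ_one]; rfl⟩
  · have hτm : ∀ w : ℂ, (starRingEnd ℂ) c * mob (-(c * a)) w
        = mob (-a) ((starRingEnd ℂ) c * w) := by
      intro w
      unfold mob
      simp only [map_neg, map_mul, neg_mul, sub_neg_eq_add]
      rw [← mul_div_assoc]
      congr 1
      · linear_combination a * hcc
      · ring
    intro w hw
    have hw1 := mem_unitDisk.mp hw
    have hcw : ‖((starRingEnd ℂ) c * w)‖ < 1 := by
      rwa [norm_mul, Complex.norm_conj, hc, one_mul]
    constructor
    · show c * mob a ((starRingEnd ℂ) c * mob (-(c * a)) w) = w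
      rw [hτm w, mob_right_inv ha1 hcw]
      linear_combination w * hcc
    · show (starRingEnd ℂ) c * mob (-(c * a)) (c * mob a w) = w
      rw [hτm (c * mob a w)]
      have h2 : (starRingEnd ℂ) c * (c * mob a w) = mob a w := by
        linear_combination (mob a w) * hcc
      rw [h2, mob_left_inv ha1 hw1]
  · intro z hz
    rw [← hsEq z hz, hseq (φ₁ z) (hφ₁m hz)]
  · have hτm : ∀ w : ℂ, (starRingEnd ℂ) c * mob (-(c * a)) w
        = mob (-a) ((starRingEnd ℂ) c * w) := by
      intro w
      unfold mob
      simp only [map_neg, map_mul, neg_mul, sub_neg_eq_add]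
      rw [← mul_div_assoc]
      congr 1
      · linear_combination a * hcc
      · ring
    intro w hw
    have hcw : ‖((starRingEnd ℂ) c * w)‖ < 1 := by
      rw [norm_mul, Complex.norm_conj, hc, one_mul]
      exact mem_unitDisk.mp hw
    have hτw : (starRingEnd ℂ) c * mob (-(c * a)) w ∈ unitDisk := by
      rw [mem_unitDisk, norm_mul, Complex.norm_conj, hc, one_mul]
      exact mob_abs_lt hca (mem_unitDisk.mp hw)
    have hστ : c * mob a ((starRingEnd ℂ) c * mob (-(c * a)) w) = w := by
      rw [hτm w, mob_right_inv ha1 hcw]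
      linear_combination w * hcc
    have htw : t w = (starRingEnd ℂ) c * mob (-(c * a)) w := by
      conv_lhs => rw [← hστ]
      rw [show c * mob a ((starRingEnd ℂ) c * mob (-(c * a)) w)
        = s ((starRingEnd ℂ) c * mob (-(c * a)) w) from (hseq _ hτw).symm]
      exact hts _ hτw
    show f₂ w = f₁ ((starRingEnd ℂ) c * mob (-(c * a)) w)
    obtain ⟨z, hz, hzw⟩ := hφ₂s w hw
    rw [← htw, ← hzw, htEq z hz, ← hfac₁ z hz, hfac₂ z hz, hzw]
end
end
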